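/- arXiv:2203.09429 — 9 statements merged into one kernel-verified Lean document; each statement's English description precedes it below -/
import Mathlib

section
/- Let d ≥ 1 and let {b_j}_{j=1}^{d} and {c_k}_{k=1}^{d} be two orthonormal bases of ℂ^d. Then ∑_{j,k=1}^{d} √(1 − |⟨b_j, c_k⟩|²) = d·√(d(d−1)) if and only if the two bases are mutually unbiased, i.e. |⟨b_j, c_k⟩|² = 1/d for all j,k. -/
open Finset
open scoped ComplexInnerProductSpace

theorem stmt_2 (d : ℕ) (hd : 1 ≤ d)
    (b c : Fin d → EuclideanSpace ℂ (Fin d))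
    (hb : Orthonormal ℂ b) (hc : Orthonormal ℂ c)
    (hbspan : Submodule.span ℂ (Set.range b) = ⊤)
    (hcspan : Submodule.span ℂ (Set.range c) = ⊤) :
    (∑ j, ∑ k, Real.sqrt (1 - ‖⟪b j, c k⟫‖ ^ 2)) = d * Real.sqrt (d * (d - 1)) ↔
      ∀ j k, ‖⟪b j, c k⟫‖ ^ 2 = 1 / d := by
  set D : ℝ := (d : ℝ) with hD
  have hD1 : (1 : ℝ) ≤ D := by rw [hD]; exact_mod_cast hd
  have hD0 : (0 : ℝ) < D := lt_of_lt_of_le one_pos hD1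
  set x : Fin d → Fin d → ℝ := fun j k => ‖⟪b j, c k⟫‖ ^ 2 with hx
  -- x ≤ 1
  have hx1 : ∀ j k, x j k ≤ 1 := by
    intro j k
    have h := norm_inner_le_norm (𝕜 := ℂ) (b j) (c k)
    rw [hb.1 j, hc.1 k, one_mul] at h
    calc x j k = ‖⟪b j, c k⟫‖ ^ 2 := rfl
      _ ≤ 1 ^ 2 := pow_le_pow_left₀ (norm_nonneg _) h 2
      _ = 1 := one_pow 2
  have hx0 : ∀ j k, 0 ≤ x j k := fun j k => sq_nonneg _
  -- Parseval: ∑ k, x j k = 1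
  let C : OrthonormalBasis (Fin d) ℂ (EuclideanSpace ℂ (Fin d)) :=
    OrthonormalBasis.mk hc hcspan.ge
  have hpar : ∀ j, ∑ k, x j k = 1 := by
    intro j
    have h := C.sum_inner_mul_inner (b j) (b j)
    simp only [C, OrthonormalBasis.coe_mk] at h
    have hbb : ⟪b j, b j⟫ = 1 := by
      have := orthonormal_iff_ite.mp hb j j
      simpa using this
    rw [hbb] at h
    have h2 : ∑ k, ((x j k : ℂ)) = 1 := by
      rw [← h]
      refine Finset.sum_congr rfl fun k _ => ?_
      have hcjk : ⟪c k, b j⟫ = starRingEnd ℂ ⟪b j, c k⟫ := (inner_conj_symm _ _).symm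
      rw [hcjk, RCLike.mul_conj]
      norm_cast
    have := congrArg Complex.re h2
    simpa using this
  have hsumx : ∑ j, ∑ k, x j k = D := by
    rw [Finset.sum_congr rfl fun j _ => hpar j]
    simp [hD]
  have hxle : ∀ j k, 0 ≤ 1 - x j k := fun j k => by linarith [hx1 j k]
  have hcst : (0:ℝ) ≤ (D - 1) / D := div_nonneg (by linarith) hD0.le
  constructor
  · intro heq
    have heq' : ∑ j, ∑ k, Real.sqrt (1 - x j k) = D * Real.sqrt (D * (D - 1)) := heq
    -- sum of squared deviations is zero
    have key : ∑ j, ∑ k, (Real.sqrt (1 - x j k) - Real.sqrt ((D - 1) / D)) ^ 2 = 0 := by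
      have expand : ∀ j k, (Real.sqrt (1 - x j k) - Real.sqrt ((D - 1) / D)) ^ 2
          = (1 - x j k) - 2 * Real.sqrt ((D - 1) / D) * Real.sqrt (1 - x j k)
            + (D - 1) / D := by
        intro j k
        rw [sub_sq, Real.sq_sqrt (hxle j k), Real.sq_sqrt hcst]; ring
      simp_rw [expand]
      rw [Finset.sum_congr rfl fun j _ => Finset.sum_add_distrib,
          Finset.sum_add_distrib]
      simp_rw [Finset.sum_sub_distrib]
      have h1 : ∑ j : Fin d, ∑ k : Fin d, (1:ℝ) = D ^ 2 := by
        rw [Finset.sum_const, Finset.sum_const]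
        simp [hD, sq]
      have h2 : ∑ j : Fin d, ∑ k : Fin d,
          2 * Real.sqrt ((D - 1) / D) * Real.sqrt (1 - x j k)
          = 2 * Real.sqrt ((D - 1) / D) * (D * Real.sqrt (D * (D - 1))) := by
        rw [← heq']
        simp only [Finset.mul_sum]
      have h3 : ∑ j : Fin d, ∑ k : Fin d, (D - 1) / D = D * (D - 1) := by
        rw [Finset.sum_const, Finset.sum_const]
        simp only [Finset.card_univ, Fintype.card_fin, smul_eq_mul, nsmul_eq_mul]
        push_cast
        field_simp
        rw [← hD]
      rw [h2, h3, h1, hsumx]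
      have hs : Real.sqrt ((D - 1) / D) * Real.sqrt (D * (D - 1)) = D - 1 := by
        rw [← Real.sqrt_mul hcst]
        have hq : (D - 1) / D * (D * (D - 1)) = (D - 1) ^ 2 := by
          field_simp
        rw [hq, Real.sqrt_sq (by linarith)]
      nlinarith [hs]
    intro j k
    have hterm : (Real.sqrt (1 - x j k) - Real.sqrt ((D - 1) / D)) ^ 2 = 0 := by
      have hnn : ∀ i ∈ Finset.univ (α := Fin d), (0:ℝ) ≤
          ∑ l, (Real.sqrt (1 - x i l) - Real.sqrt ((D - 1) / D)) ^ 2 :=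
        fun i _ => Finset.sum_nonneg fun l _ => sq_nonneg _
      have hrow : ∑ l, (Real.sqrt (1 - x j l) - Real.sqrt ((D - 1) / D)) ^ 2 = 0 :=
        (Finset.sum_eq_zero_iff_of_nonneg hnn).mp key j (Finset.mem_univ j)
      exact (Finset.sum_eq_zero_iff_of_nonneg
        (fun l _ => sq_nonneg _)).mp hrow k (Finset.mem_univ k)
    have hsq : Real.sqrt (1 - x j k) = Real.sqrt ((D - 1) / D) :=
      sub_eq_zero.mp (pow_eq_zero_iff (n := 2) (by norm_num) |>.mp hterm)
    have h1x : 1 - x j k = (D - 1) / D := by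
      have := congrArg (· ^ 2) hsq
      simpa [Real.sq_sqrt (hxle j k), Real.sq_sqrt hcst] using this
    have hxval : x j k = 1 / D := by
      field_simp at h1x ⊢; linarith
    exact hxval
  · intro hmub
    have hval : ∀ j k, (1 : ℝ) - x j k = (D - 1) / D := by
      intro j k
      have hx' : x j k = 1 / D := hmub j k
      rw [hx']; field_simp
    calc ∑ j, ∑ k, Real.sqrt (1 - x j k)
        = ∑ j : Fin d, ∑ k : Fin d, Real.sqrt ((D - 1) / D) := by
          refine Finset.sum_congr rfl fun j _ => Finset.sum_congr rfl fun k _ => ?_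
          rw [hval j k]
      _ = D ^ 2 * Real.sqrt ((D - 1) / D) := by
          rw [Finset.sum_const, Finset.sum_const]
          simp [hD, sq]; ring
      _ = D * Real.sqrt (D * (D - 1)) := by
          rw [show D * (D - 1) = (D - 1) / D * D ^ 2 by field_simp,
            Real.sqrt_mul hcst, Real.sqrt_sq hD0.le]
          ring
end

section
/- Let d ≥ 1, n ≥ 2, and let {b^y_j}_{j=1}^{d}, y = 1,…,n, be n orthonormal bases of ℂ^d. Define W = (2/d) · ∑_{1 ≤ y < z ≤ n} ∑_{j,k=1}^{d} √(1 − |⟨b^y_j, b^z_k⟩|²). Then W ≤ n(n−1)·√(d(d−1)). -/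
open Finset
open scoped ComplexInnerProductSpace

theorem stmt_3 (d n : ℕ) (hd : 1 ≤ d) (hn : 2 ≤ n)
    (b : Fin n → Fin d → EuclideanSpace ℂ (Fin d))
    (hb : ∀ y, Orthonormal ℂ (b y))
    (hbspan : ∀ y, Submodule.span ℂ (Set.range (b y)) = ⊤) :
    (2 / d) * ∑ p ∈ Finset.univ.filter (fun p : Fin n × Fin n => p.1 < p.2),
        ∑ j, ∑ k, Real.sqrt (1 - ‖⟪b p.1 j, b p.2 k⟫‖ ^ 2)
      ≤ n * (n - 1) * Real.sqrt (d * (d - 1)) := by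
  have hd0 : (0:ℝ) < d := by exact_mod_cast hd
  have hd1 : (1:ℝ) ≤ d := by exact_mod_cast hd
  -- orthonormal bases
  let B : Fin n → OrthonormalBasis (Fin d) ℂ (EuclideanSpace ℂ (Fin d)) :=
    fun y => OrthonormalBasis.mk (hb y) (by rw [hbspan y])
  have hBcoe : ∀ y j, B y j = b y j := fun y j =>
    congrFun (OrthonormalBasis.coe_mk (hb y) _) j
  have hunit : ∀ y j, ‖b y j‖ = 1 := fun y j => (hb y).1 j
  -- Parseval: for any y z j, ∑ k, ‖⟪b y j, b z k⟫‖^2 = 1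
  have parseval : ∀ y z : Fin n, ∀ j, ∑ k, ‖⟪b y j, b z k⟫‖ ^ 2 = 1 := by
    intro y z j
    have h1 : ∀ k, ‖⟪b y j, b z k⟫‖ = ‖(B z).repr (b y j) k‖ := by
      intro k
      rw [OrthonormalBasis.repr_apply_apply, hBcoe, ← norm_inner_symm]
    calc ∑ k, ‖⟪b y j, b z k⟫‖ ^ 2 = ∑ k, ‖(B z).repr (b y j) k‖ ^ 2 := by
          simp only [h1]
      _ = ‖(B z).repr (b y j)‖ ^ 2 := by
          rw [EuclideanSpace.norm_eq, Real.sq_sqrt (by positivity)]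
      _ = 1 := by
          rw [LinearIsometryEquiv.norm_map, hunit, one_pow]
  -- per-pair bound
  have key : ∀ y z : Fin n, ∑ j, ∑ k, Real.sqrt (1 - ‖⟪b y j, b z k⟫‖ ^ 2)
      ≤ d * Real.sqrt (d * (d - 1)) := by
    intro y z
    have hnn : ∀ j k : Fin d, (0:ℝ) ≤ 1 - ‖⟪b y j, b z k⟫‖ ^ 2 := by
      intro j k
      have := norm_inner_le_norm (𝕜 := ℂ) (b y j) (b z k)
      rw [hunit, hunit, one_mul] at this
      nlinarith [norm_nonneg (⟪b y j, b z k⟫)]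
    have hsumsq : ∑ j, ∑ k, ((1:ℝ) - ‖⟪b y j, b z k⟫‖ ^ 2) = (d:ℝ) * d - d := by
      have hrow : ∀ j : Fin d, ∑ k, ((1:ℝ) - ‖⟪b y j, b z k⟫‖ ^ 2) = (d:ℝ) - 1 := by
        intro j
        rw [Finset.sum_sub_distrib, parseval y z j, Finset.sum_const, card_univ,
          Fintype.card_fin, nsmul_eq_mul, mul_one]
      rw [Finset.sum_congr rfl (fun j _ => hrow j), Finset.sum_const, card_univ,
        Fintype.card_fin, nsmul_eq_mul]
      ring
    -- Cauchy–Schwarz on the d² terms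
    rw [← Finset.sum_product', Finset.univ_product_univ]
    set f : Fin d × Fin d → ℝ := fun p => Real.sqrt (1 - ‖⟪b y p.1, b z p.2⟫‖ ^ 2) with hf
    have hCS : (∑ p ∈ (univ : Finset (Fin d × Fin d)), f p) ^ 2
        ≤ (univ : Finset (Fin d × Fin d)).card * ∑ p ∈ univ, f p ^ 2 :=
      sq_sum_le_card_mul_sum_sq
    have hfsq : ∑ p ∈ (univ : Finset (Fin d × Fin d)), f p ^ 2 = d * d - d := by
      rw [← hsumsq, ← Finset.sum_product']
      exact Finset.sum_congr rfl fun p _ => Real.sq_sqrt (hnn p.1 p.2)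
    have hcard : ((univ : Finset (Fin d × Fin d)).card : ℝ) = d * d := by
      simp [card_univ]
    have hsq : (∑ p ∈ (univ : Finset (Fin d × Fin d)), f p) ^ 2
        ≤ (d * Real.sqrt (d * (d - 1))) ^ 2 := by
      have : (d * Real.sqrt (d * (d - 1))) ^ 2 = (d:ℝ) * d * (d * (d-1)) := by
        rw [mul_pow, Real.sq_sqrt (by nlinarith)]; ring
      rw [this]
      calc (∑ p ∈ (univ : Finset (Fin d × Fin d)), f p) ^ 2
          ≤ (univ : Finset (Fin d × Fin d)).card * ∑ p ∈ univ, f p ^ 2 := hCS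
        _ = (d * d) * (d * d - d) := by rw [hfsq, hcard]
        _ = (d:ℝ) * d * (d * (d-1)) := by ring
    have h0 : (0:ℝ) ≤ ∑ p ∈ (univ : Finset (Fin d × Fin d)), f p :=
      Finset.sum_nonneg fun p _ => Real.sqrt_nonneg _
    have h1 : (0:ℝ) ≤ d * Real.sqrt (d * (d - 1)) := by positivity
    nlinarith [hsq]
  -- count pairs
  set S := Finset.univ.filter (fun p : Fin n × Fin n => p.1 < p.2) with hS
  have hcardS : 2 * S.card = n * n - n := by
    have hswap : S.card = (Finset.univ.filter (fun p : Fin n × Fin n => p.2 < p.1)).card := by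
      refine Finset.card_bij' (fun p _ => (p.2, p.1)) (fun p _ => (p.2, p.1)) ?_ ?_
        (fun _ _ => rfl) (fun _ _ => rfl) <;>
      · intro p hp
        simp only [hS, Finset.mem_filter, Finset.mem_univ, true_and] at hp ⊢
        exact hp
    have hdisj : Disjoint S (Finset.univ.filter (fun p : Fin n × Fin n => p.2 < p.1)) := by
      rw [Finset.disjoint_left]
      intro p hp hq
      simp only [hS, Finset.mem_filter, Finset.mem_univ, true_and] at hp hq
      omega
    have hunion : S ∪ (Finset.univ.filter (fun p : Fin n × Fin n => p.2 < p.1))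
        = Finset.univ.filter (fun p : Fin n × Fin n => p.1 ≠ p.2) := by
      rw [hS, ← Finset.filter_or]
      apply Finset.filter_congr
      intro p _
      constructor
      · rintro (h | h) <;> omega
      · intro h; omega
    have hne : (Finset.univ.filter (fun p : Fin n × Fin n => p.1 ≠ p.2)).card = n * n - n := by
      have heq : (Finset.univ.filter (fun p : Fin n × Fin n => p.1 ≠ p.2))
          = (Finset.univ : Finset (Fin n)).offDiag := by
        ext p
        simp [Finset.mem_offDiag]
      rw [heq, Finset.offDiag_card]
      simp
    have := Finset.card_union_of_disjoint hdisj
    rw [hunion, hne, ← hswap] at this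
    omega
  -- put it together
  have hsum : ∑ p ∈ S, ∑ j, ∑ k, Real.sqrt (1 - ‖⟪b p.1 j, b p.2 k⟫‖ ^ 2)
      ≤ S.card * (d * Real.sqrt (d * (d - 1))) := by
    calc ∑ p ∈ S, ∑ j, ∑ k, Real.sqrt (1 - ‖⟪b p.1 j, b p.2 k⟫‖ ^ 2)
        ≤ ∑ _p ∈ S, d * Real.sqrt (d * (d - 1)) :=
          Finset.sum_le_sum fun p _ => key p.1 p.2
      _ = S.card * (d * Real.sqrt (d * (d - 1))) := by
          rw [Finset.sum_const, nsmul_eq_mul]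
  have h2card : (2:ℝ) * S.card = (n:ℝ) * n - n := by
    have hn2 : n ≤ n * n := Nat.le_mul_of_pos_left n (by omega)
    have hc : ((2 * S.card : ℕ) : ℝ) = ((n * n - n : ℕ) : ℝ) := by rw [hcardS]
    rw [Nat.cast_sub hn2] at hc
    push_cast at hc ⊢
    linarith
  calc (2 / d) * ∑ p ∈ S, ∑ j, ∑ k, Real.sqrt (1 - ‖⟪b p.1 j, b p.2 k⟫‖ ^ 2)
      ≤ (2 / d) * (S.card * (d * Real.sqrt (d * (d - 1)))) := by
        apply mul_le_mul_of_nonneg_left hsum (by positivity)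
    _ = (2 * S.card) * Real.sqrt (d * (d - 1)) := by
        field_simp
    _ = ((n:ℝ) * n - n) * Real.sqrt (d * (d - 1)) := by rw [h2card]
    _ = n * (n - 1) * Real.sqrt (d * (d - 1)) := by ring
end

section
/- Let d ≥ 1, n ≥ 2, and let {b^y_j}_{j=1}^{d}, y = 1,…,n, be n orthonormal bases of ℂ^d. Then (2/d) · ∑_{1 ≤ y < z ≤ n} ∑_{j,k=1}^{d} √(1 − |⟨b^y_j, b^z_k⟩|²) = n(n−1)·√(d(d−1)) if and only if the bases are pairwise mutually unbiased, i.e. |⟨b^y_j, b^z_k⟩|² = 1/d for all y ≠ z and all j,k. -/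
open Finset
open scoped ComplexInnerProductSpace

/-- tangent-line / AM-GM bound: for `c > 0`, `s ≤ (c² + s²)/(2c)` with
equality iff `s = c`. -/
lemma tangent_aux {c s : ℝ} (hc : 0 < c) :
    s ≤ (c ^ 2 + s ^ 2) / (2 * c) ∧ (s = (c ^ 2 + s ^ 2) / (2 * c) ↔ s = c) := by
  have h2c : (0:ℝ) < 2 * c := by linarith
  constructor
  · rw [le_div_iff₀ h2c]
    nlinarith [sq_nonneg (s - c)]
  · rw [eq_div_iff (ne_of_gt h2c)]
    constructor
    · intro h
      have hsq : (s - c) ^ 2 = 0 := by linear_combination -h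
      have h0 : s - c = 0 := by
        have := sq_eq_zero_iff.mp hsq
        exact this
      linarith
    · rintro rfl; ring

/-- Parseval for an orthonormal family spanning `EuclideanSpace ℂ (Fin d)`. -/
lemma parseval_aux {d : ℕ} (v : Fin d → EuclideanSpace ℂ (Fin d))
    (hv : Orthonormal ℂ v) (hvs : Submodule.span ℂ (Set.range v) = ⊤)
    (x : EuclideanSpace ℂ (Fin d)) :
    ∑ k, ‖⟪v k, x⟫‖ ^ 2 = ‖x‖ ^ 2 := by
  set B : OrthonormalBasis (Fin d) ℂ (EuclideanSpace ℂ (Fin d)) :=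
    OrthonormalBasis.mk hv (by rw [hvs]) with hB
  have hcoe : ∀ k, B k = v k := fun k => by rw [hB, OrthonormalBasis.coe_mk]
  have h1 : ‖B.repr x‖ = ‖x‖ := B.repr.norm_map x
  have h2 : ‖B.repr x‖ ^ 2 = ∑ k, ‖B.repr x k‖ ^ 2 := by
    rw [EuclideanSpace.norm_eq, Real.sq_sqrt]
    positivity
  calc ∑ k, ‖⟪v k, x⟫‖ ^ 2 = ∑ k, ‖B.repr x k‖ ^ 2 := by
        refine Finset.sum_congr rfl fun k _ => ?_
        rw [B.repr_apply_apply, hcoe]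
    _ = ‖x‖ ^ 2 := by rw [← h2, h1]

lemma pair_aux {d : ℕ} (hd : 2 ≤ d) (u v : Fin d → EuclideanSpace ℂ (Fin d))
    (hu : Orthonormal ℂ u) (hv : Orthonormal ℂ v)
    (hvs : Submodule.span ℂ (Set.range v) = ⊤) :
    (∑ j, ∑ k, Real.sqrt (1 - ‖⟪u j, v k⟫‖ ^ 2)) ≤ d * Real.sqrt (d * (d - 1)) ∧
    ((∑ j, ∑ k, Real.sqrt (1 - ‖⟪u j, v k⟫‖ ^ 2)) = d * Real.sqrt (d * (d - 1)) ↔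
      ∀ j k, ‖⟪u j, v k⟫‖ ^ 2 = 1 / d) := by
  have hD : (2:ℝ) ≤ (d:ℝ) := by exact_mod_cast hd
  have hD0 : (0:ℝ) < (d:ℝ) := by linarith
  set D : ℝ := (d:ℝ) with hDdef
  have hDne : D ≠ 0 := ne_of_gt hD0
  set c : ℝ := Real.sqrt ((D - 1) / D) with hcdef
  have hfrac : (0:ℝ) < (D - 1) / D := div_pos (by linarith) (by linarith)
  have hc : 0 < c := Real.sqrt_pos.mpr hfrac
  have hc0 : c ≠ 0 := ne_of_gt hc
  have hc2 : c ^ 2 = (D - 1) / D := Real.sq_sqrt (le_of_lt hfrac)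
  set t : Fin d → Fin d → ℝ := fun j k => ‖⟪u j, v k⟫‖ ^ 2 with htdef
  have ht1 : ∀ j k, t j k ≤ 1 := by
    intro j k
    have h := norm_inner_le_norm (𝕜 := ℂ) (u j) (v k)
    rw [hu.1 j, hv.1 k, one_mul] at h
    calc t j k ≤ 1 ^ 2 := by
          simpa [htdef] using pow_le_pow_left₀ (norm_nonneg _) h 2
      _ = 1 := one_pow 2
  have hrow : ∀ j, ∑ k, t j k = 1 := by
    intro j
    have h := parseval_aux v hv hvs (u j)
    rw [hu.1 j, one_pow] at h
    calc ∑ k, t j k = ∑ k, ‖⟪v k, u j⟫‖ ^ 2 := by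
          refine Finset.sum_congr rfl fun k _ => ?_
          rw [htdef]; rw [← norm_inner_symm]
      _ = 1 := h
  -- per-term facts
  have hs2 : ∀ j k, (Real.sqrt (1 - t j k)) ^ 2 = 1 - t j k := by
    intro j k; exact Real.sq_sqrt (by linarith [ht1 j k])
  have hterm : ∀ j k, Real.sqrt (1 - t j k) ≤ (c ^ 2 + (1 - t j k)) / (2 * c) := by
    intro j k
    have := (tangent_aux (s := Real.sqrt (1 - t j k)) hc).1
    rwa [hs2 j k] at this
  have htermiff : ∀ j k,
      (Real.sqrt (1 - t j k) = (c ^ 2 + (1 - t j k)) / (2 * c)) ↔ t j k = 1 / D := by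
    intro j k
    have h := (tangent_aux (s := Real.sqrt (1 - t j k)) hc).2
    rw [hs2 j k] at h
    rw [h]
    constructor
    · intro h'
      have h1 : 1 - t j k = c ^ 2 := by rw [← hs2 j k, h']
      rw [hc2] at h1
      field_simp at h1 ⊢
      linarith
    · intro h'
      rw [hcdef]
      congr 1
      rw [h']
      field_simp
  -- the sum of the upper bounds
  have hDc : D * c = Real.sqrt (D * (D - 1)) := by
    rw [hcdef, ← Real.sqrt_sq (le_of_lt hD0), ← Real.sqrt_mul (sq_nonneg D)]
    congr 1
    field_simp
    simp only [Real.sqrt_sq (le_of_lt hD0)]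
  have hgsum : ∑ j : Fin d, ∑ k : Fin d, (c ^ 2 + (1 - t j k)) / (2 * c)
      = D * Real.sqrt (D * (D - 1)) := by
    have inner_eq : ∀ j : Fin d, ∑ k, (c ^ 2 + (1 - t j k)) = D * (c ^ 2 + 1) - 1 := by
      intro j
      rw [Finset.sum_add_distrib, Finset.sum_sub_distrib, hrow j, Finset.sum_const,
        Finset.sum_const, Finset.card_univ, Fintype.card_fin, nsmul_eq_mul, nsmul_eq_mul,
        mul_one, ← hDdef]
      ring
    have inner2 : ∀ j : Fin d, ∑ k : Fin d, (c ^ 2 + (1 - t j k)) / (2 * c)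
        = (D * (c ^ 2 + 1) - 1) / (2 * c) := by
      intro j
      rw [← Finset.sum_div, inner_eq j]
    have expand : ∑ j : Fin d, ∑ k : Fin d, (c ^ 2 + (1 - t j k)) / (2 * c)
        = (D * (D * (c ^ 2 + 1) - 1)) / (2 * c) := by
      calc ∑ j : Fin d, ∑ k : Fin d, (c ^ 2 + (1 - t j k)) / (2 * c)
          = ∑ _j : Fin d, (D * (c ^ 2 + 1) - 1) / (2 * c) :=
            Finset.sum_congr rfl fun j _ => inner2 j
        _ = (D * (D * (c ^ 2 + 1) - 1)) / (2 * c) := by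
            rw [Finset.sum_const, Finset.card_univ, Fintype.card_fin, nsmul_eq_mul, ← hDdef,
              mul_div_assoc]
    have hc2' : c ^ 2 * D = D - 1 := by rw [hc2]; field_simp
    rw [expand, ← hDc, div_eq_iff (by positivity : (2 * c : ℝ) ≠ 0)]
    linear_combination (-D) * hc2'
  constructor
  · calc ∑ j, ∑ k, Real.sqrt (1 - t j k)
        ≤ ∑ j : Fin d, ∑ k : Fin d, (c ^ 2 + (1 - t j k)) / (2 * c) :=
          Finset.sum_le_sum fun j _ => Finset.sum_le_sum fun k _ => hterm j k
      _ = D * Real.sqrt (D * (D - 1)) := hgsum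
  · constructor
    · intro h
      have houter : ∀ j ∈ (Finset.univ : Finset (Fin d)),
          ∑ k, Real.sqrt (1 - t j k) = ∑ k : Fin d, (c ^ 2 + (1 - t j k)) / (2 * c) := by
        rw [← Finset.sum_eq_sum_iff_of_le
          (fun j _ => Finset.sum_le_sum fun k _ => hterm j k)]
        rw [h, hgsum]
      intro j k
      have hinner : ∀ k ∈ (Finset.univ : Finset (Fin d)),
          Real.sqrt (1 - t j k) = (c ^ 2 + (1 - t j k)) / (2 * c) := by
        rw [← Finset.sum_eq_sum_iff_of_le (fun k _ => hterm j k)]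
        exact houter j (Finset.mem_univ j)
      exact (htermiff j k).mp (hinner k (Finset.mem_univ k))
    · intro h
      have heq : ∀ j k, Real.sqrt (1 - t j k) = (c ^ 2 + (1 - t j k)) / (2 * c) :=
        fun j k => (htermiff j k).mpr (h j k)
      calc ∑ j, ∑ k, Real.sqrt (1 - t j k)
          = ∑ j : Fin d, ∑ k : Fin d, (c ^ 2 + (1 - t j k)) / (2 * c) :=
            Finset.sum_congr rfl fun j _ => Finset.sum_congr rfl fun k _ => heq j k
        _ = D * Real.sqrt (D * (D - 1)) := hgsum

lemma card_pairs_aux (n : ℕ) :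
    2 * (Finset.univ.filter (fun p : Fin n × Fin n => p.1 < p.2)).card = n * n - n := by
  classical
  set L := Finset.univ.filter (fun p : Fin n × Fin n => p.1 < p.2) with hL
  set G := Finset.univ.filter (fun p : Fin n × Fin n => p.2 < p.1) with hG
  have hmap : G = L.map (Equiv.prodComm (Fin n) (Fin n)).toEmbedding := by
    ext p
    rw [Finset.mem_map_equiv]
    simp [hL, hG]
  have hcardLG : G.card = L.card := by rw [hmap, Finset.card_map]
  have hdisj : Disjoint L G := by
    rw [Finset.disjoint_left]
    intro p hp hq
    simp only [hL, Finset.mem_filter, Finset.mem_univ, true_and] at hp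
    simp only [hG, Finset.mem_filter, Finset.mem_univ, true_and] at hq
    exact absurd hq (not_lt_of_gt hp)
  have hunion : L ∪ G = (Finset.univ : Finset (Fin n)).offDiag := by
    ext p
    simp only [hL, hG, Finset.mem_union, Finset.mem_filter, Finset.mem_univ, true_and,
      Finset.mem_offDiag]
    constructor
    · rintro (h | h)
      · exact ne_of_lt h
      · exact ne_of_gt h
    · exact fun h => lt_or_gt_of_ne h
  have hoff : (Finset.univ : Finset (Fin n)).offDiag.card = n * n - n := by
    rw [Finset.offDiag_card, Finset.card_univ, Fintype.card_fin]
  calc 2 * L.card = L.card + G.card := by rw [hcardLG]; ring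
    _ = (L ∪ G).card := (Finset.card_union_of_disjoint hdisj).symm
    _ = n * n - n := by rw [hunion, hoff]

theorem stmt_4 (d n : ℕ) (hd : 1 ≤ d) (hn : 2 ≤ n)
    (b : Fin n → Fin d → EuclideanSpace ℂ (Fin d))
    (hb : ∀ y, Orthonormal ℂ (b y))
    (hbspan : ∀ y, Submodule.span ℂ (Set.range (b y)) = ⊤) :
    (2 / d) * ∑ p ∈ Finset.univ.filter (fun p : Fin n × Fin n => p.1 < p.2),
        ∑ j, ∑ k, Real.sqrt (1 - ‖⟪b p.1 j, b p.2 k⟫‖ ^ 2)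
      = n * (n - 1) * Real.sqrt (d * (d - 1)) ↔
      ∀ y z, y ≠ z → ∀ j k, ‖⟪b y j, b z k⟫‖ ^ 2 = 1 / d := by
  classical
  have hpars : ∀ y z j, ∑ k, ‖⟪b y j, b z k⟫‖ ^ 2 = 1 := by
    intro y z j
    have h := parseval_aux (b z) (hb z) (hbspan z) (b y j)
    rw [(hb y).1 j, one_pow] at h
    calc ∑ k, ‖⟪b y j, b z k⟫‖ ^ 2 = ∑ k, ‖⟪b z k, b y j⟫‖ ^ 2 := by
          refine Finset.sum_congr rfl fun k _ => ?_
          rw [← norm_inner_symm]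
      _ = 1 := h
  rcases eq_or_lt_of_le hd with hd1 | hd2
  · -- d = 1 : both sides hold
    have hd1' : d = 1 := hd1.symm
    subst hd1'
    have hall : ∀ y z (j k : Fin 1), ‖⟪b y j, b z k⟫‖ ^ 2 = 1 := by
      intro y z j k
      have h := hpars y z j
      rw [Fin.sum_univ_one] at h
      have h0 : (0 : Fin 1) = k := Subsingleton.elim _ _
      rwa [h0] at h
    constructor
    · intro _ y z _ j k
      rw [hall y z j k]
      norm_num
    · intro _
      have hz : ∀ p ∈ Finset.univ.filter (fun p : Fin n × Fin n => p.1 < p.2),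
          ∑ j, ∑ k, Real.sqrt (1 - ‖⟪b p.1 j, b p.2 k⟫‖ ^ 2) = (0:ℝ) := by
        intro p _
        refine Finset.sum_eq_zero fun j _ => Finset.sum_eq_zero fun k _ => ?_
        rw [hall p.1 p.2 j k]
        simp
      rw [Finset.sum_congr rfl hz]
      simp
  · -- d ≥ 2
    have hd2' : 2 ≤ d := hd2
    have hD0 : (0:ℝ) < (d:ℝ) := by
      have : 0 < d := by omega
      exact_mod_cast this
    have hdne : (d:ℝ) ≠ 0 := ne_of_gt hD0
    set P := Finset.univ.filter (fun p : Fin n × Fin n => p.1 < p.2) with hP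
    set M : ℝ := (d:ℝ) * Real.sqrt ((d:ℝ) * ((d:ℝ) - 1)) with hM
    have hpair : ∀ y z : Fin n,
        (∑ j, ∑ k, Real.sqrt (1 - ‖⟪b y j, b z k⟫‖ ^ 2)) ≤ M ∧
        ((∑ j, ∑ k, Real.sqrt (1 - ‖⟪b y j, b z k⟫‖ ^ 2)) = M ↔
          ∀ j k, ‖⟪b y j, b z k⟫‖ ^ 2 = 1 / d) :=
      fun y z => pair_aux hd2' (b y) (b z) (hb y) (hb z) (hbspan z)
    have hcard : (P.card : ℝ) = (n:ℝ) * ((n:ℝ) - 1) / 2 := by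
      have h := card_pairs_aux n
      have hle : n ≤ n * n := Nat.le_mul_of_pos_left n (by omega)
      have h' : (2:ℝ) * (P.card : ℝ) = (n:ℝ) * (n:ℝ) - (n:ℝ) := by
        have h2 := congrArg (fun x : ℕ => (x:ℝ)) h
        push_cast [Nat.cast_sub hle] at h2
        linarith [h2]
      linarith
    constructor
    · intro H
      have hsum : ∑ p ∈ P, ∑ j, ∑ k, Real.sqrt (1 - ‖⟪b p.1 j, b p.2 k⟫‖ ^ 2)
          = ∑ _p ∈ P, M := by
        calc ∑ p ∈ P, ∑ j, ∑ k, Real.sqrt (1 - ‖⟪b p.1 j, b p.2 k⟫‖ ^ 2)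
            = ((d:ℝ)/2) * ((2/(d:ℝ)) *
                ∑ p ∈ P, ∑ j, ∑ k, Real.sqrt (1 - ‖⟪b p.1 j, b p.2 k⟫‖ ^ 2)) := by
              rw [← mul_assoc, div_mul_div_comm,
                show (d:ℝ) * 2 / (2 * (d:ℝ)) = 1 by rw [mul_comm]; exact div_self (by positivity), one_mul]
          _ = ((d:ℝ)/2) * ((n:ℝ) * ((n:ℝ) - 1) * Real.sqrt ((d:ℝ) * ((d:ℝ) - 1))) := by
              rw [H]
          _ = ∑ _p ∈ P, M := by
              rw [Finset.sum_const, nsmul_eq_mul, hcard, hM]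
              ring
      have heach := (Finset.sum_eq_sum_iff_of_le
        (fun p (_ : p ∈ P) => (hpair p.1 p.2).1)).mp hsum
      intro y z hyz j k
      rcases lt_or_gt_of_ne hyz with hlt | hgt
      · have hmem : (y, z) ∈ P := by
          rw [hP]; simp [hlt]
        exact ((hpair y z).2.mp (heach (y, z) hmem)) j k
      · have hmem : (z, y) ∈ P := by
          rw [hP]; simp [hgt]
        have := ((hpair z y).2.mp (heach (z, y) hmem)) k j
        rwa [← norm_inner_symm] at this
    · intro H
      have heach : ∀ p ∈ P, ∑ j, ∑ k, Real.sqrt (1 - ‖⟪b p.1 j, b p.2 k⟫‖ ^ 2) = M := by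
        intro p hp
        have hne : p.1 ≠ p.2 := by
          rw [hP] at hp
          simp only [Finset.mem_filter, Finset.mem_univ, true_and] at hp
          exact ne_of_lt hp
        exact (hpair p.1 p.2).2.mpr (H p.1 p.2 hne)
      rw [Finset.sum_congr rfl heach, Finset.sum_const, nsmul_eq_mul, hcard, hM]
      field_simp
end

section
/- Let d ≥ 1 and n ≥ 2. There exist n orthonormal bases {b^y_j}_{j=1}^{d} (y = 1,…,n) of ℂ^d with (2/d) · ∑_{1 ≤ y < z ≤ n} ∑_{j,k=1}^{d} √(1 − |⟨b^y_j, b^z_k⟩|²) = n(n−1)·√(d(d−1)) if and only if there exist n pairwise mutually unbiased bases in dimension d. -/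
open Finset
open scoped ComplexInnerProductSpace

lemma tangent_le (a t : ℝ) (ha : 0 < a) (ht : 0 ≤ t) :
    Real.sqrt t ≤ (t + a) / (2 * Real.sqrt a) := by
  have hsa : 0 < Real.sqrt a := Real.sqrt_pos.mpr ha
  rw [le_div_iff₀ (by positivity)]
  nlinarith [sq_nonneg (Real.sqrt t - Real.sqrt a), Real.sq_sqrt ht, Real.sq_sqrt ha.le,
    Real.sqrt_nonneg t, Real.sqrt_nonneg a]

lemma tangent_eq (a t : ℝ) (ha : 0 < a) (ht : 0 ≤ t)
    (h : Real.sqrt t = (t + a) / (2 * Real.sqrt a)) : t = a := by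
  have hsa : 0 < Real.sqrt a := Real.sqrt_pos.mpr ha
  have h' : Real.sqrt t * (2 * Real.sqrt a) = t + a := by
    field_simp at h; linarith [h]
  have h0 : (Real.sqrt t - Real.sqrt a) ^ 2 = 0 := by
    nlinarith [Real.sq_sqrt ht, Real.sq_sqrt ha.le]
  have := pow_eq_zero_iff (n := 2) (by norm_num) |>.mp h0
  have h2 : Real.sqrt t = Real.sqrt a := by linarith
  calc t = Real.sqrt t ^ 2 := (Real.sq_sqrt ht).symm
    _ = Real.sqrt a ^ 2 := by rw [h2]
    _ = a := Real.sq_sqrt ha.le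

lemma parseval {d : ℕ} (b : Fin d → EuclideanSpace ℂ (Fin d))
    (hb : Orthonormal ℂ b) (hsp : Submodule.span ℂ (Set.range b) = ⊤)
    (v : EuclideanSpace ℂ (Fin d)) : ∑ j, ‖⟪b j, v⟫‖ ^ 2 = ‖v‖ ^ 2 := by
  let B : OrthonormalBasis (Fin d) ℂ (EuclideanSpace ℂ (Fin d)) :=
    OrthonormalBasis.mk hb hsp.ge
  have hB : ∀ j, B j = b j := fun j => by simp [B, OrthonormalBasis.coe_mk]
  have h1 : ‖B.repr v‖ ^ 2 = ‖v‖ ^ 2 := by rw [B.repr.norm_map]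
  rw [← h1, PiLp.norm_sq_eq_of_L2]
  refine Finset.sum_congr rfl fun j _ => ?_
  rw [B.repr_apply_apply, hB]

lemma card_lt_pairs (n : ℕ) :
    (Finset.univ.filter (fun p : Fin n × Fin n => p.1 < p.2)).card * 2 = n * (n - 1) := by
  have hsym : (Finset.univ.filter (fun p : Fin n × Fin n => p.1 < p.2)).card
      = (Finset.univ.filter (fun p : Fin n × Fin n => p.2 < p.1)).card := by
    apply Finset.card_nbij (fun p => (p.2, p.1))
    · intro p hp; simp at hp ⊢; exact hp
    · intro p hp q hq h; simpa [Prod.ext_iff, and_comm] using h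
    · intro p hp; simp at hp ⊢; exact ⟨p.2, p.1, hp, rfl⟩
  have hdisj : Disjoint (Finset.univ.filter (fun p : Fin n × Fin n => p.1 < p.2))
      (Finset.univ.filter (fun p : Fin n × Fin n => p.2 < p.1)) := by
    rw [Finset.disjoint_filter]
    intro p _ h1 h2
    exact absurd h2 (not_lt_of_gt h1)
  have hunion : (Finset.univ : Finset (Fin n)).offDiag
      = (Finset.univ.filter (fun p : Fin n × Fin n => p.1 < p.2))
        ∪ (Finset.univ.filter (fun p : Fin n × Fin n => p.2 < p.1)) := by
    ext p
    simp only [Finset.mem_offDiag, Finset.mem_union, Finset.mem_filter, Finset.mem_univ,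
      true_and]
    constructor
    · exact fun h => lt_or_gt_of_ne h
    · rintro (h | h)
      · exact h.ne
      · exact h.ne'
  have hcard := Finset.offDiag_card (Finset.univ : Finset (Fin n))
  rw [Finset.card_univ, Fintype.card_fin, hunion, Finset.card_union_of_disjoint hdisj,
    ← hsym] at hcard
  rw [Nat.mul_sub, mul_one]
  omega

lemma d_sqrt (d : ℕ) (hd : 1 ≤ d) :
    (d : ℝ) * Real.sqrt (1 - 1 / d) = Real.sqrt (d * (d - 1)) := by
  have hd0 : (0:ℝ) < d := by exact_mod_cast hd
  have h1 : (d:ℝ) * ((d:ℝ) - 1) = (d:ℝ)^2 * (1 - 1/d) := by field_simp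
  rw [h1, Real.sqrt_mul (by positivity), Real.sqrt_sq hd0.le]

lemma parseval_double {d : ℕ} (c e : Fin d → EuclideanSpace ℂ (Fin d))
    (hy1 : Orthonormal ℂ c) (hz1 : Orthonormal ℂ e)
    (hz2 : Submodule.span ℂ (Set.range e) = ⊤) :
    ∑ j, ∑ k, ‖⟪c j, e k⟫‖ ^ 2 = (d : ℝ) := by
  have h1 : ∀ j, ∑ k, ‖⟪c j, e k⟫‖ ^ 2 = 1 := by
    intro j
    have h := parseval e hz1 hz2 (c j)
    rw [hy1.1 j, one_pow] at h
    rw [← h]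
    exact Finset.sum_congr rfl fun k _ => by rw [norm_inner_symm]
  rw [Finset.sum_congr rfl fun j _ => h1 j]
  simp


lemma inner_sq_le_one {d : ℕ} (u v : EuclideanSpace ℂ (Fin d))
    (hu : ‖u‖ = 1) (hv : ‖v‖ = 1) : ‖⟪u, v⟫‖ ^ 2 ≤ 1 := by
  have h := norm_inner_le_norm (𝕜 := ℂ) u v
  rw [hu, hv, mul_one] at h
  calc ‖⟪u, v⟫‖ ^ 2 ≤ 1 ^ 2 := by
        exact pow_le_pow_left₀ (norm_nonneg _) h 2
    _ = 1 := one_pow 2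

lemma pair_sum_le {d : ℕ} (hd : 2 ≤ d) (c e : Fin d → EuclideanSpace ℂ (Fin d))
    (hc : Orthonormal ℂ c) (he : Orthonormal ℂ e)
    (hesp : Submodule.span ℂ (Set.range e) = ⊤) :
    ∑ j, ∑ k, (1 - ‖⟪c j, e k⟫‖ ^ 2 + (1 - 1/(d:ℝ))) / (2 * Real.sqrt (1 - 1/(d:ℝ)))
      = (d:ℝ)^2 * Real.sqrt (1 - 1/(d:ℝ)) := by
  have hd0 : (0:ℝ) < d := by positivity
  set a : ℝ := 1 - 1 / d with ha_def
  have ha : 0 < a := by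
    have : 1 / (d:ℝ) < 1 := by
      rw [div_lt_one hd0]; exact_mod_cast lt_of_lt_of_le one_lt_two hd
    simp only [ha_def]; linarith
  have hsa : 0 < Real.sqrt a := Real.sqrt_pos.mpr ha
  have hx := parseval_double c e hc he hesp
  have hnum : ∑ j, ∑ k, (1 - ‖⟪c j, e k⟫‖ ^ 2 + a) = (d:ℝ)^2 * (1 + a) - d := by
    have h1 : ∀ j k, (1 - ‖⟪c j, e k⟫‖ ^ 2 + a) = (1 + a) - ‖⟪c j, e k⟫‖ ^ 2 := by
      intro j k; ring
    simp only [h1, Finset.sum_sub_distrib, Finset.sum_const, Finset.card_univ,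
      Fintype.card_fin, nsmul_eq_mul, hx]
    ring
  calc ∑ j, ∑ k, (1 - ‖⟪c j, e k⟫‖ ^ 2 + a) / (2 * Real.sqrt a)
      = (∑ j, ∑ k, (1 - ‖⟪c j, e k⟫‖ ^ 2 + a)) / (2 * Real.sqrt a) := by
        simp only [← Finset.sum_div]
    _ = ((d:ℝ)^2 * (1 + a) - d) / (2 * Real.sqrt a) := by rw [hnum]
    _ = ((d:ℝ)^2 * (2 * a)) / (2 * Real.sqrt a) := by
        congr 1
        have hda : (d:ℝ) * a = d - 1 := by rw [ha_def, mul_sub, mul_one, mul_one_div_cancel hd0.ne']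
        nlinarith [hda]
    _ = (d:ℝ)^2 * (a / Real.sqrt a) := by
        rw [mul_div_assoc, mul_div_mul_left _ _ (two_ne_zero)]
    _ = (d:ℝ)^2 * Real.sqrt a := by rw [Real.div_sqrt]

lemma forward_key (d n : ℕ) (hd : 2 ≤ d)
    (b : Fin n → Fin d → EuclideanSpace ℂ (Fin d))
    (hon : ∀ y, Orthonormal ℂ (b y))
    (hsp : ∀ y, Submodule.span ℂ (Set.range (b y)) = ⊤)
    (hn : 2 ≤ n)
    (hsum : (2 / d) * ∑ p ∈ Finset.univ.filter (fun p : Fin n × Fin n => p.1 < p.2),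
          ∑ j, ∑ k, Real.sqrt (1 - ‖⟪b p.1 j, b p.2 k⟫‖ ^ 2)
        = n * (n - 1) * Real.sqrt (d * (d - 1))) :
    ∀ y z, y < z → ∀ j k, ‖⟪b y j, b z k⟫‖ ^ 2 = 1 / d := by
  have hd0 : (0:ℝ) < d := by positivity
  set a : ℝ := 1 - 1 / d with ha_def
  have ha : 0 < a := by
    have : 1 / (d:ℝ) < 1 := by
      rw [div_lt_one hd0]; exact_mod_cast lt_of_lt_of_le one_lt_two hd
    simp only [ha_def]; linarith
  have hsa : 0 < Real.sqrt a := Real.sqrt_pos.mpr ha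
  set P := Finset.univ.filter (fun p : Fin n × Fin n => p.1 < p.2) with hP
  -- pointwise bound
  have hpt : ∀ (y z : Fin n) (j k : Fin d),
      Real.sqrt (1 - ‖⟪b y j, b z k⟫‖ ^ 2)
        ≤ (1 - ‖⟪b y j, b z k⟫‖ ^ 2 + a) / (2 * Real.sqrt a) := by
    intro y z j k
    refine tangent_le a _ ha ?_
    have := inner_sq_le_one (b y j) (b z k) ((hon y).1 j) ((hon z).1 k)
    linarith
  -- per-pair bound
  have hpair : ∀ (y z : Fin n),
      ∑ j, ∑ k, Real.sqrt (1 - ‖⟪b y j, b z k⟫‖ ^ 2) ≤ (d:ℝ)^2 * Real.sqrt a := by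
    intro y z
    calc ∑ j, ∑ k, Real.sqrt (1 - ‖⟪b y j, b z k⟫‖ ^ 2)
        ≤ ∑ j, ∑ k, (1 - ‖⟪b y j, b z k⟫‖ ^ 2 + a) / (2 * Real.sqrt a) :=
          Finset.sum_le_sum fun j _ => Finset.sum_le_sum fun k _ => hpt y z j k
      _ = (d:ℝ)^2 * Real.sqrt a :=
          pair_sum_le hd (b y) (b z) (hon y) (hon z) (hsp z)
  -- total sum equality
  have hcard : (P.card : ℝ) * 2 = n * ((n:ℝ) - 1) := by
    have := card_lt_pairs n
    have h1 : ((P.card * 2 : ℕ) : ℝ) = ((n * (n-1) : ℕ) : ℝ) := by rw [hP]; exact_mod_cast this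
    push_cast [Nat.cast_sub (le_trans one_le_two hn)] at h1
    linarith
  have hds : (d:ℝ) * Real.sqrt a = Real.sqrt (d * (d - 1)) := d_sqrt d (le_trans one_le_two hd)
  have htot : ∑ p ∈ P, ∑ j, ∑ k, Real.sqrt (1 - ‖⟪b p.1 j, b p.2 k⟫‖ ^ 2)
      = ∑ p ∈ P, (d:ℝ)^2 * Real.sqrt a := by
    have h2d : (2 / (d:ℝ)) ≠ 0 := by positivity
    apply mul_left_cancel₀ h2d
    rw [hsum, Finset.sum_const, nsmul_eq_mul, ← hds]
    field_simp
    linear_combination (-1:ℝ) * hcard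
  have heach := (Finset.sum_eq_sum_iff_of_le fun p (_ : p ∈ P) => hpair p.1 p.2).mp htot
  intro y z hyz j k
  have hmem : (y, z) ∈ P := by simp [hP, hyz]
  have hFp := heach (y, z) hmem
  -- flatten double sums
  have hflat1 : ∑ p ∈ (Finset.univ ×ˢ Finset.univ : Finset (Fin d × Fin d)),
      Real.sqrt (1 - ‖⟪b y p.1, b z p.2⟫‖ ^ 2)
      = ∑ p ∈ (Finset.univ ×ˢ Finset.univ : Finset (Fin d × Fin d)),
      (1 - ‖⟪b y p.1, b z p.2⟫‖ ^ 2 + a) / (2 * Real.sqrt a) := by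
    rw [Finset.sum_product, Finset.sum_product]
    rw [hFp]
    exact (pair_sum_le hd (b y) (b z) (hon y) (hon z) (hsp z)).symm
  have heach2 := (Finset.sum_eq_sum_iff_of_le
    (fun p (_ : p ∈ (Finset.univ ×ˢ Finset.univ : Finset (Fin d × Fin d))) =>
      hpt y z p.1 p.2)).mp hflat1
  have hjk := heach2 (j, k) (by simp)
  have ht : 0 ≤ 1 - ‖⟪b y j, b z k⟫‖ ^ 2 := by
    have := inner_sq_le_one (b y j) (b z k) ((hon y).1 j) ((hon z).1 k)
    linarith
  have := tangent_eq a _ ha ht hjk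
  simp only [ha_def] at this
  linarith

lemma dim_one_inner {u v : EuclideanSpace ℂ (Fin 1)} (hu : ‖u‖ = 1) (hv : ‖v‖ = 1) :
    ‖⟪u, v⟫‖ = 1 := by
  have h0 : ∀ w : EuclideanSpace ℂ (Fin 1), ‖w‖ = ‖w 0‖ := by
    intro w
    rw [EuclideanSpace.norm_eq]
    simp [Fin.sum_univ_one, Real.sqrt_sq (norm_nonneg _)]
  have hi : ⟪u, v⟫ = (starRingEnd ℂ) (u 0) * v 0 := by
    simp [PiLp.inner_apply, RCLike.inner_apply, Fin.sum_univ_one]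
    exact mul_comm _ _
  rw [hi, norm_mul, RCLike.norm_conj, ← h0, ← h0, hu, hv, mul_one]

theorem stmt_5 (d n : ℕ) (hd : 1 ≤ d) (hn : 2 ≤ n) :
    (∃ b : Fin n → Fin d → EuclideanSpace ℂ (Fin d),
      (∀ y, Orthonormal ℂ (b y)) ∧
      (∀ y, Submodule.span ℂ (Set.range (b y)) = ⊤) ∧
      (2 / d) * ∑ p ∈ Finset.univ.filter (fun p : Fin n × Fin n => p.1 < p.2),
          ∑ j, ∑ k, Real.sqrt (1 - ‖⟪b p.1 j, b p.2 k⟫‖ ^ 2)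
        = n * (n - 1) * Real.sqrt (d * (d - 1))) ↔
    (∃ b : Fin n → Fin d → EuclideanSpace ℂ (Fin d),
      (∀ y, Orthonormal ℂ (b y)) ∧
      (∀ y, Submodule.span ℂ (Set.range (b y)) = ⊤) ∧
      ∀ y z, y ≠ z → ∀ j k, ‖⟪b y j, b z k⟫‖ ^ 2 = 1 / d) := by
  constructor
  · rintro ⟨b, hon, hsp, hsum⟩
    refine ⟨b, hon, hsp, ?_⟩
    rcases eq_or_lt_of_le hd with hd1 | hd2
    · -- d = 1
      subst hd1
      intro y z _ j k
      have := dim_one_inner ((hon y).1 j) ((hon z).1 k)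
      rw [this]
      norm_num
    · -- 2 ≤ d
      have hd2' : 2 ≤ d := hd2
      intro y z hyz j k
      rcases hyz.lt_or_gt with h | h
      · exact forward_key d n hd2' b hon hsp hn hsum y z h j k
      · rw [norm_inner_symm]
        exact forward_key d n hd2' b hon hsp hn hsum z y h k j
  · rintro ⟨b, hon, hsp, hmub⟩
    refine ⟨b, hon, hsp, ?_⟩
    have hd0 : (0:ℝ) < d := by positivity
    set P := Finset.univ.filter (fun p : Fin n × Fin n => p.1 < p.2) with hP
    have hcard : (P.card : ℝ) * 2 = n * ((n:ℝ) - 1) := by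
      have h0 := card_lt_pairs n
      have h1 : ((P.card * 2 : ℕ) : ℝ) = ((n * (n-1) : ℕ) : ℝ) := by
        rw [hP]; exact_mod_cast h0
      push_cast [Nat.cast_sub (le_trans one_le_two hn)] at h1
      linarith
    have hterm : ∀ p ∈ P, ∑ j, ∑ k, Real.sqrt (1 - ‖⟪b p.1 j, b p.2 k⟫‖ ^ 2)
        = (d:ℝ)^2 * Real.sqrt (1 - 1/d) := by
      intro p hp
      have hne : p.1 ≠ p.2 := by
        rw [hP, Finset.mem_filter] at hp
        exact hp.2.ne
      simp only [hmub p.1 p.2 hne, Finset.sum_const, Finset.card_univ, Fintype.card_fin,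
        nsmul_eq_mul]
      ring
    rw [Finset.sum_congr rfl hterm, Finset.sum_const, nsmul_eq_mul]
    rw [← d_sqrt d hd]
    field_simp
    linear_combination Real.sqrt (((d:ℝ)-1)/d) * hcard
end

section
/- Let P and Q be rank-one orthogonal projections on ℂ^d (i.e. self-adjoint idempotent d×d complex matrices of trace 1). Then (P − Q)³ = (1 − tr(PQ))·(P − Q). -/
open Matrix LinearMap Module

lemma key {d : ℕ} (P A : Matrix (Fin d) (Fin d) ℂ)
    (hP2 : P * P = P) (hPtr : P.trace = 1) :
    P * A * P = (P * A).trace • P := by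
  set f := Matrix.toLin' P with hf
  have hidem : f ∘ₗ f = f := by rw [hf, ← Matrix.toLin'_mul, hP2]
  obtain ⟨p, hp⟩ := (LinearMap.isProj_iff_isIdempotentElem f).mpr hidem
  have htr : LinearMap.trace ℂ (Fin d → ℂ) f = P.trace := by
    rw [LinearMap.trace_eq_matrix_trace ℂ (Pi.basisFun ℂ (Fin d)),
      LinearMap.toMatrix_eq_toMatrix', hf, LinearMap.toMatrix'_toLin']
  have hfin : finrank ℂ p = 1 := by
    have h1 := hp.trace
    rw [htr, hPtr] at h1
    exact_mod_cast h1.symm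
  obtain ⟨v, hv0, hv⟩ := finrank_eq_one_iff'.mp hfin
  -- (P*A) applied to v lands back in p, so it's t • v
  have hmem : ∀ x, Matrix.toLin' (P * A) (x : Fin d → ℂ) ∈ p := by
    intro x
    rw [Matrix.toLin'_mul]
    exact hp.map_mem _
  obtain ⟨t, ht⟩ := hv ⟨Matrix.toLin' (P * A) (v : Fin d → ℂ), hmem v⟩
  -- show P A P = t • P as linear maps
  have hmaps : Matrix.toLin' (P * A * P) = Matrix.toLin' (t • P) := by
    refine LinearMap.ext fun x => ?_
    have hx : f x ∈ p := hp.map_mem x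
    obtain ⟨c, hc⟩ := hv ⟨f x, hx⟩
    have hc' : (c • (v : Fin d → ℂ)) = f x := congrArg Subtype.val hc
    have ht' : (t • (v : Fin d → ℂ)) = Matrix.toLin' (P * A) (v : Fin d → ℂ) :=
      congrArg Subtype.val ht
    simp only [Matrix.toLin'_mul, LinearMap.comp_apply, LinearMap.map_smul]
    rw [Matrix.toLin'_mul] at ht'
    calc Matrix.toLin' P (Matrix.toLin' A (f x))
        = Matrix.toLin' P (Matrix.toLin' A (c • (v : Fin d → ℂ))) := by rw [hc']
      _ = c • Matrix.toLin' P (Matrix.toLin' A (v : Fin d → ℂ)) := by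
          rw [_root_.map_smul, _root_.map_smul]
      _ = c • (t • (v : Fin d → ℂ)) := by
          rw [ht']; simp [Matrix.toLin'_mul]
      _ = t • (c • (v : Fin d → ℂ)) := smul_comm _ _ _
      _ = t • f x := by rw [hc']
      _ = Matrix.toLin' (t • P) x := by simp [hf]
  have hPAP : P * A * P = t • P := Matrix.toLin'.injective hmaps
  -- compute t via trace
  have htrace : (P * A).trace = t := by
    have : (P * A * P).trace = (t • P).trace := by rw [hPAP]
    rw [Matrix.trace_smul, hPtr, Matrix.trace_mul_cycle, hP2] at this
    simpa using this
  rw [hPAP, htrace]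

theorem stmt_7 (d : ℕ) (P Q : Matrix (Fin d) (Fin d) ℂ)
    (hP : P.IsHermitian) (hP2 : P * P = P) (hPtr : P.trace = 1)
    (hQ : Q.IsHermitian) (hQ2 : Q * Q = Q) (hQtr : Q.trace = 1) :
    (P - Q) ^ 3 = (1 - (P * Q).trace) • (P - Q) := by
  have h1 : P * Q * P = (P * Q).trace • P := key P Q hP2 hPtr
  have h2 : Q * P * Q = (Q * P).trace • Q := key Q P hQ2 hQtr
  have htr : (Q * P).trace = (P * Q).trace := Matrix.trace_mul_comm Q P
  rw [htr] at h2
  have expand : (P - Q) ^ 3 = P * P * P - P * P * Q - P * Q * P + P * Q * Q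
      - Q * P * P + Q * P * Q + Q * Q * P - Q * Q * Q := by
    noncomm_ring
  rw [mul_assoc P Q Q, mul_assoc Q P P, hP2, hQ2, hP2, hQ2] at expand
  rw [expand, h1, h2]
  rw [sub_smul, one_smul, smul_sub]
  abel
end

section
/- Let d ≥ 2 and let P and Q be rank-one orthogonal projections on ℂ^d with tr(PQ) < 1, and set λ = √(1 − tr(PQ)). Then the self-adjoint matrix P − Q has eigenvalue λ with multiplicity one, eigenvalue −λ with multiplicity one, and eigenvalue 0 with multiplicity d − 2. -/
open Matrix

lemma rank_one_proj {d : ℕ} (B : Matrix (Fin d) (Fin d) ℂ)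
    (hB : B.IsHermitian) (hB2 : B * B = B) (hBtr : B.trace = 1) :
    ∃ v : Fin d → ℂ, B = Matrix.vecMulVec v (star v) := by
  classical
  set μ := hB.eigenvalues with hμ
  set b := hB.eigenvectorBasis with hb
  set U := (hB.eigenvectorUnitary : Matrix (Fin d) (Fin d) ℂ) with hU
  -- eigenvalues are 0 or 1
  have h01 : ∀ i, μ i = 0 ∨ μ i = 1 := by
    intro i
    have h1 : B *ᵥ ⇑(b i) = (μ i) • ⇑(b i) := hB.mulVec_eigenvectorBasis i
    have h2 : (B * B) *ᵥ ⇑(b i) = (μ i * μ i) • ⇑(b i) := by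
      rw [← Matrix.mulVec_mulVec, h1, Matrix.mulVec_smul, h1, smul_smul]
    rw [hB2, h1] at h2
    have hbne : ⇑(b i) ≠ 0 := by
      intro h
      have := b.orthonormal.1 i
      rw [show (b i : EuclideanSpace ℂ (Fin d)) = 0 from PiLp.ext fun j => congrFun h j] at this
      simp at this
    have h3 : (μ i * μ i - μ i) • ⇑(b i) = 0 := by
      rw [sub_smul, ← h2, sub_self]
    rcases smul_eq_zero.mp h3 with h | h
    · have h4 : μ i * (μ i - 1) = 0 := by rw [mul_sub, mul_one]; exact h
      rcases mul_eq_zero.mp h4 with h5 | h5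
      · exact Or.inl h5
      · exact Or.inr (by linarith [sub_eq_zero.mp h5])
    · exact absurd h hbne
  -- sum of eigenvalues = trace = 1
  have hUU : star U * U = 1 := (Matrix.mem_unitaryGroup_iff').mp hB.eigenvectorUnitary.2
  have htr : ∑ i, (μ i : ℂ) = 1 := by
    have := congrArg Matrix.trace hB.spectral_theorem
    rw [hBtr, Unitary.conjStarAlgAut_apply, Matrix.trace_mul_cycle] at this
    rw [show star (hB.eigenvectorUnitary : Matrix (Fin d) (Fin d) ℂ) * (hB.eigenvectorUnitary : Matrix (Fin d) (Fin d) ℂ) = 1 from hUU, Matrix.one_mul, Matrix.trace_diagonal] at this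
    exact this.symm
  have htrR : ∑ i, μ i = 1 := by
    have : ((∑ i, μ i : ℝ) : ℂ) = ((1 : ℝ) : ℂ) := by push_cast; simpa using htr
    exact_mod_cast this
  -- find the unique index with eigenvalue 1
  have hex : ∃ i0, μ i0 = 1 := by
    by_contra h
    push_neg at h
    have : ∀ i, μ i = 0 := fun i => (h01 i).resolve_right (h i)
    rw [Finset.sum_congr rfl fun i _ => this i] at htrR
    simp at htrR
  obtain ⟨i0, hi0⟩ := hex
  have hrest : ∀ j, j ≠ i0 → μ j = 0 := by
    intro j hj
    have hsplit : ∑ i ∈ Finset.univ.erase i0, μ i = 0 := by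
      have := Finset.add_sum_erase Finset.univ μ (Finset.mem_univ i0)
      rw [htrR, hi0] at this
      linarith
    have hnn : ∀ i ∈ Finset.univ.erase i0, 0 ≤ μ i := by
      intro i _
      rcases h01 i with h | h <;> simp [h]
    have := (Finset.sum_eq_zero_iff_of_nonneg hnn).mp hsplit j (by simp [hj])
    exact this
  refine ⟨⇑(b i0), ?_⟩
  ext j k
  conv_lhs => rw [hB.spectral_theorem, Unitary.conjStarAlgAut_apply]
  rw [Matrix.mul_apply]
  rw [Finset.sum_eq_single i0]
  · simp only [Matrix.mul_diagonal, Matrix.vecMulVec_apply, Matrix.star_apply,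
      Function.comp_apply, ← hμ, ← hU, hi0]
    have h1 : U j i0 = (WithLp.equiv 2 (Fin d → ℂ)) (b i0) j := rfl
    have h2 : U k i0 = (WithLp.equiv 2 (Fin d → ℂ)) (b i0) k := rfl
    rw [h1, h2]
    push_cast
    simp [Pi.star_apply, mul_comm]
  · intro c _ hc
    simp only [Matrix.mul_diagonal, Function.comp_apply, ← hμ, ← hU, hrest c hc]
    simp
  · simp

lemma vmv_mul {d : ℕ} (a b c e : Fin d → ℂ) :
    vecMulVec a b * vecMulVec c e = (b ⬝ᵥ c) • vecMulVec a e := by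
  ext i j
  simp only [Matrix.mul_apply, vecMulVec_apply, Matrix.smul_apply, dotProduct, smul_eq_mul,
    Finset.sum_mul]
  exact Finset.sum_congr rfl fun k _ => by ring

lemma vmv_trace {d : ℕ} (a b : Fin d → ℂ) :
    (vecMulVec a b).trace = b ⬝ᵥ a := by
  simp [Matrix.trace, Matrix.diag, vecMulVec_apply, dotProduct, mul_comm]

lemma vmv_mulVec {d : ℕ} (a b x : Fin d → ℂ) :
    vecMulVec a b *ᵥ x = (b ⬝ᵥ x) • a := by
  ext i
  simp [Matrix.mulVec, vecMulVec_apply, dotProduct, Finset.sum_mul, Finset.mul_sum]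
  exact Finset.sum_congr rfl fun k _ => by ring

lemma star_dp {d : ℕ} (a b : Fin d → ℂ) : star a ⬝ᵥ b = star (star b ⬝ᵥ a) := by
  simp [dotProduct, Finset.sum_comm, mul_comm]

open scoped ComplexOrder
theorem stmt_9 (d : ℕ) (hd : 2 ≤ d) (P Q : Matrix (Fin d) (Fin d) ℂ)
    (hP : P.IsHermitian) (hP2 : P * P = P) (hPtr : P.trace = 1)
    (hQ : Q.IsHermitian) (hQ2 : Q * Q = Q) (hQtr : Q.trace = 1)
    (hPQ : (P * Q).trace < 1)
    (lam : ℝ) (hlam : lam = Real.sqrt (1 - ((P * Q).trace.re))) :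
    Module.finrank ℂ (Module.End.eigenspace (P - Q).mulVecLin (lam : ℂ)) = 1 ∧
    Module.finrank ℂ (Module.End.eigenspace (P - Q).mulVecLin (-lam : ℂ)) = 1 ∧
    Module.finrank ℂ (Module.End.eigenspace (P - Q).mulVecLin (0 : ℂ)) = d - 2 := by
  classical
  obtain ⟨u, hu⟩ := rank_one_proj P hP hP2 hPtr
  obtain ⟨v, hv⟩ := rank_one_proj Q hQ hQ2 hQtr
  set s : ℂ := star u ⬝ᵥ v with hs
  have hsbar : star v ⬝ᵥ u = star s := by rw [hs, ← star_dp]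
  set r : ℝ := Complex.normSq s with hr
  have hss : s * star s = (r : ℂ) := by
    rw [RCLike.star_def, Complex.mul_conj]
  -- trace of P*Q
  have hPQm : P * Q = s • vecMulVec u (star v) := by
    rw [hu, hv, vmv_mul, hs]
  have htrPQ : (P * Q).trace = (r : ℂ) := by
    rw [hPQm, Matrix.trace_smul, vmv_trace, hsbar, smul_eq_mul, hss]
  have hr1 : r < 1 := by
    rw [htrPQ] at hPQ
    exact_mod_cast hPQ
  have hr0 : 0 ≤ r := Complex.normSq_nonneg s
  have hre : (P * Q).trace.re = r := by rw [htrPQ]; simp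
  have hlam2 : lam ^ 2 = 1 - r := by
    rw [hlam, hre, Real.sq_sqrt (by linarith)]
  have hlam0 : 0 < lam := by
    rw [hlam, hre]; exact Real.sqrt_pos.mpr (by linarith)
  set lamC : ℂ := (lam : ℂ) with hlamC
  have hlamCne : lamC ≠ 0 := by
    simp only [hlamC, ne_eq, Complex.ofReal_eq_zero]
    exact ne_of_gt hlam0
  have hlamC2 : lamC ^ 2 = ((1 - r : ℝ) : ℂ) := by
    rw [hlamC, ← Complex.ofReal_pow, hlam2]
  -- key matrix identities
  have e1 : P * Q * P = (r : ℂ) • P := by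
    rw [hPQm, Matrix.smul_mul, hu, vmv_mul, hsbar, smul_smul, hss, ← hu]
  have hQPm : Q * P = star s • vecMulVec v (star u) := by
    rw [hu, hv, vmv_mul, hsbar]
  have e2 : Q * P * Q = (r : ℂ) • Q := by
    rw [hQPm, Matrix.smul_mul, hv, vmv_mul, hs, smul_smul, mul_comm (star s) s, hss, ← hv]
  have hA3 : (P - Q) * (P - Q) * (P - Q) = lamC ^ 2 • (P - Q) := by
    have expand : (P - Q) * (P - Q) * (P - Q) =
        P * P * P - P * P * Q - P * Q * P + P * (Q * Q) - Q * (P * P) + Q * P * Q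
          + Q * Q * P - Q * Q * Q := by noncomm_ring
    rw [expand, hP2, hQ2, hP2, hQ2, e1, e2, hlamC2]
    rw [show ((1 - r : ℝ) : ℂ) = 1 - (r : ℂ) by push_cast; ring]
    rw [sub_smul, one_smul, smul_sub]
    abel
  have htrA : (P - Q).trace = 0 := by
    rw [Matrix.trace_sub, hPtr, hQtr, sub_self]
  have htrA2 : ((P - Q) * (P - Q)).trace = ((2 - 2 * r : ℝ) : ℂ) := by
    have expand : (P - Q) * (P - Q) = P * P - P * Q - Q * P + Q * Q := by noncomm_ring
    rw [expand, hP2, hQ2, Matrix.trace_add, Matrix.trace_sub, Matrix.trace_sub,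
      Matrix.trace_mul_comm Q P, htrPQ, hPtr, hQtr]
    push_cast; ring
  -- membership criterion
  have hmem : ∀ (μ : ℂ) (x : Fin d → ℂ),
      x ∈ Module.End.eigenspace (P - Q).mulVecLin μ ↔ (P - Q) *ᵥ x = μ • x := by
    intro μ x
    rw [Module.End.mem_eigenspace_iff, Matrix.mulVecLin_apply]
  -- existence of eigenvectors for ±lamC
  have exist_eig : ∀ σ : ℂ, σ ^ 2 = lamC ^ 2 →
      Module.End.eigenspace (P - Q).mulVecLin σ ≠ ⊥ := by
    intro σ hσ
    set M := (P - Q) * (P - Q) + σ • (P - Q) with hM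
    have hMne : M ≠ 0 := by
      intro h
      have h' := congrArg Matrix.trace h
      rw [hM, Matrix.trace_add, Matrix.trace_smul, htrA, htrA2, smul_zero, add_zero,
        Matrix.trace_zero] at h'
      have : (2 - 2 * r : ℝ) = 0 := by exact_mod_cast h'
      linarith
    obtain ⟨y, hy⟩ : ∃ y, M *ᵥ y ≠ 0 := by
      by_contra h
      push_neg at h
      apply hMne
      ext i j
      have := congrFun (h (Pi.single j 1)) i
      simpa using this
    refine (Submodule.ne_bot_iff _).mpr ⟨M *ᵥ y, ?_, hy⟩
    rw [hmem, Matrix.mulVec_mulVec]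
    have hAM : (P - Q) * M = σ • M := by
      calc (P - Q) * M = (P - Q) * (P - Q) * (P - Q) + σ • ((P - Q) * (P - Q)) := by
            rw [hM, mul_add, mul_smul_comm, ← mul_assoc]
        _ = σ • ((P - Q) * (P - Q) + σ • (P - Q)) := by
            rw [hA3, ← hσ, smul_add, smul_smul, add_comm, sq σ]
    rw [hAM, Matrix.smul_mulVec]
  -- pairwise disjointness of eigenspaces
  have disj : ∀ a b : ℂ, a ≠ b →
      Disjoint (Module.End.eigenspace (P - Q).mulVecLin a)
        (Module.End.eigenspace (P - Q).mulVecLin b) := by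
    intro a b hab
    rw [Submodule.disjoint_def]
    intro x hxa hxb
    have h1 := (hmem a x).mp hxa
    have h2 := (hmem b x).mp hxb
    have h3 : (a - b) • x = 0 := by rw [sub_smul, ← h1, ← h2, sub_self]
    rcases smul_eq_zero.mp h3 with h | h
    · exact absurd (sub_eq_zero.mp h) hab
    · exact h
  set Ep := Module.End.eigenspace (P - Q).mulVecLin lamC with hEp
  set Em := Module.End.eigenspace (P - Q).mulVecLin (-lamC) with hEm
  set E0 := Module.End.eigenspace (P - Q).mulVecLin 0 with hE0
  have hne1 : lamC ≠ -lamC := fun h => hlamCne (by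
    have : (2 : ℂ) * lamC = 0 := by linear_combination h
    simpa using this)
  have hne2 : lamC ≠ 0 := hlamCne
  have hne3 : (-lamC : ℂ) ≠ 0 := neg_ne_zero.mpr hlamCne
  -- sup of the three eigenspaces is everything
  have hsup : Ep ⊔ Em ⊔ E0 = ⊤ := by
    refine eq_top_iff.mpr fun x _ => ?_
    set z := (P - Q) *ᵥ x with hz
    set z2 := (P - Q) *ᵥ z with hz2
    have hz3 : (P - Q) *ᵥ z2 = lamC ^ 2 • z := by
      rw [hz2, hz, Matrix.mulVec_mulVec, Matrix.mulVec_mulVec, hA3,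
        Matrix.smul_mulVec]
    have hwp : z2 + lamC • z ∈ Ep := by
      rw [hEp, hmem, Matrix.mulVec_add, Matrix.mulVec_smul, hz3, ← hz2]
      module
    have hwm : z2 - lamC • z ∈ Em := by
      rw [hEm, hmem, Matrix.mulVec_sub, Matrix.mulVec_smul, hz3, ← hz2]
      module
    have hw0 : lamC ^ 2 • x - z2 ∈ E0 := by
      rw [hE0, hmem, Matrix.mulVec_sub, Matrix.mulVec_smul, hz3, ← hz]
      module
    have hx : x = ((2 * lamC ^ 2)⁻¹ • (z2 + lamC • z) + (2 * lamC ^ 2)⁻¹ • (z2 - lamC • z))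
        + (lamC ^ 2)⁻¹ • (lamC ^ 2 • x - z2) := by
      match_scalars <;> field_simp <;> ring
    rw [hx]
    exact Submodule.add_mem_sup
      (Submodule.add_mem_sup (Submodule.smul_mem _ _ hwp) (Submodule.smul_mem _ _ hwm))
      (Submodule.smul_mem _ _ hw0)
  -- range bound : everything in Ep ⊔ Em lies in span {u, v}
  set W : Submodule ℂ (Fin d → ℂ) := Submodule.span ℂ {u, v} with hW
  have hrange : ∀ x : Fin d → ℂ, (P - Q) *ᵥ x ∈ W := by
    intro x
    rw [Matrix.sub_mulVec, hu, hv, vmv_mulVec, vmv_mulVec]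
    exact Submodule.sub_mem _
      (Submodule.smul_mem _ _ (Submodule.subset_span (Set.mem_insert _ _)))
      (Submodule.smul_mem _ _ (Submodule.subset_span
        (Set.mem_insert_of_mem _ (Set.mem_singleton _))))
  have hEpW : Ep ≤ W := by
    intro x hx
    have h1 := (hmem lamC x).mp hx
    have : x = lamC⁻¹ • ((P - Q) *ᵥ x) := by
      rw [h1, smul_smul, inv_mul_cancel₀ hne2, one_smul]
    rw [this]
    exact Submodule.smul_mem _ _ (hrange x)
  have hEmW : Em ≤ W := by
    intro x hx
    have h1 := (hmem (-lamC) x).mp hx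
    have : x = (-lamC)⁻¹ • ((P - Q) *ᵥ x) := by
      rw [h1, smul_smul, inv_mul_cancel₀ hne3, one_smul]
    rw [this]
    exact Submodule.smul_mem _ _ (hrange x)
  have hWrank : Module.finrank ℂ W ≤ 2 := by
    have h1 : W = (Submodule.span ℂ {u}) ⊔ Submodule.span ℂ {v} := by
      rw [hW, ← Submodule.span_union]
      congr 1
      try simp [Set.insert_eq]
    have h2 : Module.finrank ℂ (Submodule.span ℂ ({u} : Set (Fin d → ℂ))) ≤ 1 := by
      by_cases hu0 : u = 0
      · rw [hu0, Submodule.span_zero_singleton]; simp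
      · exact le_of_eq (finrank_span_singleton hu0)
    have h3 : Module.finrank ℂ (Submodule.span ℂ ({v} : Set (Fin d → ℂ))) ≤ 1 := by
      by_cases hv0 : v = 0
      · rw [hv0, Submodule.span_zero_singleton]; simp
      · exact le_of_eq (finrank_span_singleton hv0)
    have h4 := Submodule.finrank_sup_add_finrank_inf_eq
      (Submodule.span ℂ ({u} : Set (Fin d → ℂ))) (Submodule.span ℂ ({v} : Set (Fin d → ℂ)))
    rw [h1]
    omega
  -- dimension bookkeeping
  have hdisjPM : Disjoint Ep Em := disj _ _ hne1
  have hdisj0 : Disjoint (Ep ⊔ Em) E0 := by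
    rw [Submodule.disjoint_def]
    intro x hx hx0
    obtain ⟨p, hp, q, hq, hpq⟩ := Submodule.mem_sup.mp hx
    have h0 := (hmem 0 x).mp hx0
    rw [zero_smul] at h0
    have hfp := (hmem lamC p).mp hp
    have hfq := (hmem (-lamC) q).mp hq
    have hsum : lamC • p + (-lamC) • q = 0 := by
      rw [← hfp, ← hfq, ← Matrix.mulVec_add, hpq, h0]
    have hpq2 : p = q := by
      have : lamC • (p - q) = 0 := by
        rw [smul_sub]
        rw [neg_smul] at hsum
        linear_combination (norm := module) hsum
      rcases smul_eq_zero.mp this with h | h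
      · exact absurd h hne2
      · exact sub_eq_zero.mp h
    have hp0 : p = 0 := by
      have hqq : p ∈ Em := by rw [hpq2]; exact hq
      have : p ∈ Ep ⊓ Em := ⟨hp, hqq⟩
      rwa [hdisjPM.eq_bot, Submodule.mem_bot] at this
    have hq0 : q = 0 := by rw [← hpq2]; exact hp0
    rw [← hpq, hp0, hq0, add_zero]
  have hsupPM : Module.finrank ℂ (Ep ⊔ Em : Submodule ℂ (Fin d → ℂ))
      = Module.finrank ℂ Ep + Module.finrank ℂ Em := by
    have := Submodule.finrank_sup_add_finrank_inf_eq Ep Em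
    rw [hdisjPM.eq_bot] at this
    simpa using this
  have htotal : Module.finrank ℂ (Ep ⊔ Em : Submodule ℂ (Fin d → ℂ))
      + Module.finrank ℂ E0 = d := by
    have := Submodule.finrank_sup_add_finrank_inf_eq (Ep ⊔ Em) E0
    rw [hdisj0.eq_bot, hsup] at this
    simp [Module.finrank_fintype_fun_eq_card] at this
    omega
  have hEpMle : Module.finrank ℂ Ep + Module.finrank ℂ Em ≤ 2 := by
    rw [← hsupPM]
    calc Module.finrank ℂ (Ep ⊔ Em : Submodule ℂ (Fin d → ℂ)) ≤ Module.finrank ℂ W :=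
          Submodule.finrank_mono (sup_le hEpW hEmW)
      _ ≤ 2 := hWrank
  have hEp1 : 1 ≤ Module.finrank ℂ Ep :=
    Submodule.one_le_finrank_iff.mpr (exist_eig lamC rfl)
  have hEm1 : 1 ≤ Module.finrank ℂ Em :=
    Submodule.one_le_finrank_iff.mpr (exist_eig (-lamC) (by ring))
  have hgoal1 : Module.finrank ℂ Ep = 1 := by omega
  have hgoal2 : Module.finrank ℂ Em = 1 := by omega
  have hgoal3 : Module.finrank ℂ E0 = d - 2 := by omega
  exact ⟨hgoal1, by rw [show (-(lam : ℝ) : ℂ) = -lamC by push_cast; ring] at *; exact hgoal2, hgoal3⟩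
end

section
/- Let d ≥ 2 and let P and Q be rank-one orthogonal projections on ℂ^d with tr(PQ) < 1, and set λ = √(1 − tr(PQ)). Then there exist rank-one orthogonal projections A₊ and A₋ on ℂ^d with A₊A₋ = 0 such that P − Q = λ·(A₊ − A₋). -/
open scoped ComplexOrder

open Matrix in
private lemma stmt10_sandwich (d : ℕ) (u : Fin d → ℂ) (M : Matrix (Fin d) (Fin d) ℂ) :
    vecMulVec u (star u) * M * vecMulVec u (star u)
      = (M * vecMulVec u (star u)).trace • vecMulVec u (star u) := by
  ext i j
  simp [Matrix.mul_apply, Matrix.vecMulVec_apply, Matrix.trace, Matrix.diag,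
    Finset.sum_mul, Finset.mul_sum]
  rw [Finset.sum_comm]
  congr 1; ext k; congr 1; ext l; ring

open Matrix in
private lemma stmt10_rank_one (d : ℕ) (P : Matrix (Fin d) (Fin d) ℂ)
    (hP : P.IsHermitian) (hP2 : P * P = P) (hPtr : P.trace = 1) :
    ∃ u : Fin d → ℂ, P = vecMulVec u (star u) := by
  set U : Matrix (Fin d) (Fin d) ℂ := (hP.eigenvectorUnitary : Matrix (Fin d) (Fin d) ℂ) with hU
  have hUU : star U * U = 1 := Unitary.coe_star_mul_self hP.eigenvectorUnitary
  have hUU' : U * star U = 1 := Unitary.coe_mul_star_self hP.eigenvectorUnitary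
  set ev : Fin d → ℝ := hP.eigenvalues with hev
  set E : Matrix (Fin d) (Fin d) ℂ := diagonal (fun i => (ev i : ℂ)) with hE
  have hspec : P = U * E * star U := hP.spectral_theorem
  have h2 : U * (E * E) * star U = U * E * star U := by
    calc U * (E * E) * star U = (U * E * ((star U * U) * E)) * star U := by
          rw [hUU]; simp only [Matrix.one_mul, Matrix.mul_assoc]
      _ = (U * E * star U) * (U * E * star U) := by simp only [Matrix.mul_assoc]
      _ = U * E * star U := by rw [← hspec, hP2, hspec]
  have hdiag : E * E = E := by
    calc E * E = (star U * U) * (E * E) * (star U * U) := by rw [hUU]; simp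
      _ = star U * (U * (E * E) * star U) * U := by simp only [Matrix.mul_assoc]
      _ = star U * (U * E * star U) * U := by rw [h2]
      _ = (star U * U) * E * (star U * U) := by simp only [Matrix.mul_assoc]
      _ = E := by rw [hUU]; simp
  have h01 : ∀ i, ev i = 0 ∨ ev i = 1 := by
    intro i
    have h := congrFun (congrFun hdiag i) i
    rw [hE, Matrix.diagonal_mul_diagonal] at h
    simp only [Matrix.diagonal_apply_eq] at h
    have h' : ev i * ev i = ev i := by exact_mod_cast h
    have h'' : ev i * (ev i - 1) = 0 := by ring_nf; linarith [h']
    rcases mul_eq_zero.mp h'' with h3 | h3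
    · exact Or.inl h3
    · exact Or.inr (by linarith)
  have htr : ∑ i, ev i = 1 := by
    have : P.trace = ∑ i, (ev i : ℂ) := by
      rw [hspec, Matrix.trace_mul_comm, ← Matrix.mul_assoc, hUU, Matrix.one_mul, hE,
        Matrix.trace_diagonal]
    rw [hPtr] at this
    exact_mod_cast this.symm
  have hex : ∃ i₀, ev i₀ = 1 := by
    by_contra hc
    push_neg at hc
    have : ∀ i, ev i = 0 := fun i => (h01 i).resolve_right (hc i)
    simp [this] at htr
  obtain ⟨i₀, hi₀⟩ := hex
  have hzero : ∀ j, j ≠ i₀ → ev j = 0 := by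
    intro j hj
    have hnn : ∀ i ∈ Finset.univ.erase i₀, 0 ≤ ev i := by
      intro i _; rcases h01 i with h | h <;> simp [h]
    have hsum : ∑ i ∈ Finset.univ.erase i₀, ev i = 0 := by
      have := Finset.add_sum_erase Finset.univ ev (Finset.mem_univ i₀)
      rw [htr, hi₀] at this
      linarith
    exact (Finset.sum_eq_zero_iff_of_nonneg hnn).mp hsum j (by simp [hj])
  have hev' : ∀ x, ((ev x : ℂ)) = if x = i₀ then 1 else 0 := by
    intro x
    by_cases h : x = i₀
    · simp [h, hi₀]
    · simp [h, hzero x h]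
  refine ⟨fun i => U i i₀, ?_⟩
  ext i j
  rw [hspec]
  simp [Matrix.mul_apply, Matrix.vecMulVec_apply, hE, Matrix.diagonal_apply, hev',
    ite_mul, mul_ite, mul_zero, zero_mul, Finset.sum_ite_eq', Finset.sum_ite_eq,
    Matrix.star_apply]

set_option maxHeartbeats 1000000 in
theorem stmt_10 (d : ℕ) (hd : 2 ≤ d) (P Q : Matrix (Fin d) (Fin d) ℂ)
    (hP : P.IsHermitian) (hP2 : P * P = P) (hPtr : P.trace = 1)
    (hQ : Q.IsHermitian) (hQ2 : Q * Q = Q) (hQtr : Q.trace = 1)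
    (hPQ : (P * Q).trace < 1)
    (lam : ℝ) (hlam : lam = Real.sqrt (1 - ((P * Q).trace.re))) :
    ∃ Aplus Aminus : Matrix (Fin d) (Fin d) ℂ,
      Aplus.IsHermitian ∧ Aplus * Aplus = Aplus ∧ Aplus.trace = 1 ∧
      Aminus.IsHermitian ∧ Aminus * Aminus = Aminus ∧ Aminus.trace = 1 ∧
      Aplus * Aminus = 0 ∧
      P - Q = (lam : ℂ) • (Aplus - Aminus) := by
  obtain ⟨u, hu⟩ := stmt10_rank_one d P hP hP2 hPtr
  obtain ⟨v, hv⟩ := stmt10_rank_one d Q hQ hQ2 hQtr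
  set t : ℂ := (P * Q).trace with ht
  have hlt := Complex.lt_def.mp hPQ
  simp only [Complex.one_re, Complex.one_im] at hlt
  have htre : (t.re : ℂ) = t := Complex.ext (by simp) (by simp [hlt.2])
  have hpos : (0:ℝ) < 1 - t.re := by linarith [hlt.1]
  have hlam2 : (lam:ℝ)^2 = 1 - t.re := by
    rw [hlam]; exact Real.sq_sqrt (le_of_lt hpos)
  have hlampos : 0 < lam := by rw [hlam]; exact Real.sqrt_pos.mpr hpos
  set c : ℂ := (lam : ℂ) with hc
  have hcne : c ≠ 0 := by
    simp [hc, Complex.ofReal_ne_zero, ne_of_gt hlampos]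
  have hc2 : c^2 = 1 - t := by
    rw [hc, ← Complex.ofReal_pow, hlam2, Complex.ofReal_sub, Complex.ofReal_one, htre]
  have hPQP : P * (Q * P) = t • P := by
    rw [← Matrix.mul_assoc, hu, stmt10_sandwich, ← hu, Matrix.trace_mul_comm, ← ht]
  have hQPQ : Q * (P * Q) = t • Q := by
    rw [← Matrix.mul_assoc, hv, stmt10_sandwich, ← hv, ← ht]
  set D : Matrix (Fin d) (Fin d) ℂ := P - Q with hD
  have hDD : D * D = P + Q - P * Q - Q * P := by
    rw [hD]
    simp only [Matrix.sub_mul, Matrix.mul_sub, hP2, hQ2]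
    abel
  have hD3 : D * D * D = c^2 • D := by
    have h : D * D * D = P - Q - P*(Q*P) + Q*(P*Q) := by
      rw [hDD, hD]
      simp only [Matrix.sub_mul, Matrix.add_mul, Matrix.mul_sub, Matrix.mul_assoc, hP2, hQ2]
      abel
    rw [h, hPQP, hQPQ, hc2, hD]
    module
  have hD4 : D * D * D * D = c^2 • (D * D) := by
    rw [hD3, Matrix.smul_mul]
  have htrD : D.trace = 0 := by simp [hD, Matrix.trace_sub, hPtr, hQtr]
  have htrDD : (D * D).trace = 2 * c^2 := by
    rw [hDD, Matrix.trace_sub, Matrix.trace_sub, Matrix.trace_add, hPtr, hQtr,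
      Matrix.trace_mul_comm Q P, ← ht, hc2]
    ring
  set s : ℂ := (2 * c^2)⁻¹ with hs
  have h2c2 : (2:ℂ) * c^2 ≠ 0 := by
    simp [pow_eq_zero_iff, hcne]
  have hsmul : s * (2 * c^2) = 1 := inv_mul_cancel₀ h2c2
  set Ap : Matrix (Fin d) (Fin d) ℂ := s • (D * D + c • D) with hAp
  set Am : Matrix (Fin d) (Fin d) ℂ := s • (D * D - c • D) with hAm
  have hDH : D.IsHermitian := hP.sub hQ
  have hconjc : star c = c := by simp [hc, Complex.star_def, Complex.conj_ofReal]
  have hconjs : star s = s := by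
    rw [hs, star_inv₀, star_mul', star_pow, hconjc]
    norm_num
  have hDDH : (D * D).IsHermitian := by
    unfold Matrix.IsHermitian
    rw [Matrix.conjTranspose_mul, hDH.eq]
  have hsc : s * (2 * c^2) = 1 := hsmul
  refine ⟨Ap, Am, ?_, ?_, ?_, ?_, ?_, ?_, ?_, ?_⟩
  · unfold Matrix.IsHermitian
    rw [hAp, Matrix.conjTranspose_smul, Matrix.conjTranspose_add, Matrix.conjTranspose_smul,
      hDH.eq, hDDH.eq, hconjc, hconjs]
  · rw [hAp]
    simp only [Matrix.smul_mul, Matrix.mul_smul, Matrix.mul_add, Matrix.add_mul,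
      smul_add, smul_smul, ← Matrix.mul_assoc]
    rw [hD3]
    simp only [Matrix.smul_mul, smul_smul]
    match_scalars <;> (rw [hs]; field_simp; try ring)
  · rw [hAp, Matrix.trace_smul, Matrix.trace_add, Matrix.trace_smul, htrDD, htrD]
    rw [smul_zero, add_zero, smul_eq_mul]
    exact hsmul
  · unfold Matrix.IsHermitian
    rw [hAm, Matrix.conjTranspose_smul, Matrix.conjTranspose_sub, Matrix.conjTranspose_smul,
      hDH.eq, hDDH.eq, hconjc, hconjs]
  · rw [hAm]
    simp only [Matrix.smul_mul, Matrix.mul_smul, Matrix.mul_sub, Matrix.sub_mul,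
      smul_sub, smul_smul, ← Matrix.mul_assoc]
    rw [hD3]
    simp only [Matrix.smul_mul, smul_smul]
    match_scalars <;> (rw [hs]; field_simp; try ring)
  · rw [hAm, Matrix.trace_smul, Matrix.trace_sub, Matrix.trace_smul, htrDD, htrD]
    rw [smul_zero, sub_zero, smul_eq_mul]
    exact hsmul
  · rw [hAp, hAm]
    simp only [Matrix.smul_mul, Matrix.mul_smul, Matrix.mul_sub, Matrix.sub_mul,
      Matrix.mul_add, Matrix.add_mul, smul_sub, smul_add, smul_smul, ← Matrix.mul_assoc]
    rw [hD3]
    simp only [Matrix.smul_mul, smul_smul]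
    match_scalars <;> (rw [hs]; field_simp; try ring)
  · show D = c • (Ap - Am)
    rw [hAp, hAm, smul_sub, smul_smul, smul_smul]
    match_scalars <;> (rw [hs]; field_simp; try ring)
end

section
/- Let P and Q be rank-one orthogonal projections on ℂ^d, and let A₁, A₂ be positive semidefinite d×d complex matrices with A₁ + A₂ ≤ 𝟙 (in the Loewner order). Then tr[(A₁ − A₂)(P − Q)] ≤ 2·√(1 − tr(PQ)). -/
open scoped ComplexOrder
open Matrix Finset

private lemma conj_cancel' {d : ℕ} (U : Matrix.unitaryGroup (Fin d) ℂ) (M N : Matrix (Fin d) (Fin d) ℂ)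
    (h : (U : Matrix (Fin d) (Fin d) ℂ) * M * star (U : Matrix (Fin d) (Fin d) ℂ)
       = (U : Matrix (Fin d) (Fin d) ℂ) * N * star (U : Matrix (Fin d) (Fin d) ℂ)) : M = N := by
  have h2 := congrArg (fun X => star (U : Matrix (Fin d) (Fin d) ℂ) * X * (U : Matrix (Fin d) (Fin d) ℂ)) h
  simp only [← mul_assoc, Unitary.coe_star_mul_self, one_mul] at h2
  simpa [mul_assoc, Unitary.coe_star_mul_self, mul_one] using h2

private lemma unitary_conj_mul' {d : ℕ} (U : Matrix.unitaryGroup (Fin d) ℂ) (M N : Matrix (Fin d) (Fin d) ℂ) :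
    ((U : Matrix (Fin d) (Fin d) ℂ) * M * star (U : Matrix (Fin d) (Fin d) ℂ))
      * ((U : Matrix (Fin d) (Fin d) ℂ) * N * star (U : Matrix (Fin d) (Fin d) ℂ))
    = (U : Matrix (Fin d) (Fin d) ℂ) * (M * N) * star (U : Matrix (Fin d) (Fin d) ℂ) := by
  have hstar : star (U : Matrix (Fin d) (Fin d) ℂ) * U = 1 := Unitary.coe_star_mul_self U
  calc ((U : Matrix (Fin d) (Fin d) ℂ) * M * star (U : Matrix (Fin d) (Fin d) ℂ))
      * ((U : Matrix (Fin d) (Fin d) ℂ) * N * star (U : Matrix (Fin d) (Fin d) ℂ))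
      = (U : Matrix (Fin d) (Fin d) ℂ) * M * ((star (U : Matrix (Fin d) (Fin d) ℂ) * U) * (N * star (U : Matrix (Fin d) (Fin d) ℂ))) := by
        simp only [mul_assoc]
    _ = _ := by rw [hstar, one_mul]; simp only [mul_assoc]

private lemma trace_unitary_conj' {d : ℕ} (U : Matrix.unitaryGroup (Fin d) ℂ) (M : Matrix (Fin d) (Fin d) ℂ) :
    ((U : Matrix (Fin d) (Fin d) ℂ) * M * star (U : Matrix (Fin d) (Fin d) ℂ)).trace = M.trace := by
  rw [trace_mul_cycle, Unitary.coe_star_mul_self U, one_mul]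

private lemma psd_diag_re_nonneg' {d : ℕ} {N : Matrix (Fin d) (Fin d) ℂ} (hN : N.PosSemidef) (i : Fin d) :
    0 ≤ (N i i).re := by
  have h := hN.dotProduct_mulVec_nonneg (Pi.single i 1)
  have h2 : star (Pi.single i 1 : Fin d → ℂ) ⬝ᵥ (N *ᵥ Pi.single i 1) = N i i := by
    simp [dotProduct, mulVec, Pi.single_apply, Finset.sum_ite_eq]
  rw [h2] at h
  exact (Complex.le_def.mp h).1

private lemma rank_one_vec' {d : ℕ} (P : Matrix (Fin d) (Fin d) ℂ)
    (hP : P.IsHermitian) (hP2 : P * P = P) (hPtr : P.trace = 1) :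
    ∃ u : Fin d → ℂ, (∀ a b, P a b = u a * (starRingEnd ℂ) (u b)) := by
  set U : Matrix (Fin d) (Fin d) ℂ := (hP.eigenvectorUnitary : Matrix (Fin d) (Fin d) ℂ) with hU
  set e : Fin d → ℝ := hP.eigenvalues with he
  set D : Matrix (Fin d) (Fin d) ℂ := diagonal (RCLike.ofReal ∘ e) with hDdef
  have hstar : star U * U = 1 := Unitary.coe_star_mul_self hP.eigenvectorUnitary
  have hspec : P = U * D * star U := hP.spectral_theorem
  have hD2 : D * D = D := by
    apply conj_cancel' hP.eigenvectorUnitary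
    have key : (U * D * star U) * (U * D * star U) = U * (D * D) * star U :=
      unitary_conj_mul' hP.eigenvectorUnitary D D
    rw [← key, ← hspec, hP2, hspec]
  have he2 : ∀ i, e i * e i = e i := by
    intro i
    have h3 := congrFun (congrFun hD2 i) i
    simp only [hDdef, diagonal_mul_diagonal, diagonal_apply_eq, Function.comp_apply] at h3
    exact_mod_cast h3
  have htr : ∑ i, e i = 1 := by
    have h1 : P.trace = D.trace := by rw [hspec, trace_unitary_conj']
    rw [hPtr, hDdef, trace_diagonal] at h1
    have h4 : ((∑ i, e i : ℝ) : ℂ) = 1 := by push_cast; simpa using h1.symm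
    exact_mod_cast h4
  have h01 : ∀ i, e i = 0 ∨ e i = 1 := by
    intro i
    have h5 : e i * (e i - 1) = 0 := by have := he2 i; ring_nf; linarith
    rcases mul_eq_zero.mp h5 with h | h
    · exact Or.inl h
    · exact Or.inr (by linarith)
  obtain ⟨i₀, hi₀⟩ : ∃ i₀, e i₀ = 1 := by
    by_contra hc
    push_neg at hc
    have : ∀ i, e i = 0 := fun i => (h01 i).resolve_right (hc i)
    simp [this] at htr
  have hzero : ∀ j, j ≠ i₀ → e j = 0 := by
    intro j hj
    have hsum : ∑ i ∈ Finset.univ.erase i₀, e i = 0 := by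
      have h7 := Finset.add_sum_erase Finset.univ e (Finset.mem_univ i₀)
      rw [htr, hi₀] at h7
      linarith
    have hnn : ∀ i ∈ Finset.univ.erase i₀, 0 ≤ e i := by
      intro i _
      rcases h01 i with h | h <;> simp [h]
    exact (Finset.sum_eq_zero_iff_of_nonneg hnn).mp hsum j (by simp [hj])
  refine ⟨fun k => U k i₀, fun a b => ?_⟩
  have h5 : ∀ c, (U * D) a c = U a c * (e c : ℂ) := fun c => by
    rw [hDdef, mul_diagonal]; rfl
  have h6 : (U * D * star U) a b = ∑ c, U a c * (e c : ℂ) * star (U b c) := by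
    rw [mul_apply]
    refine Finset.sum_congr rfl fun c _ => ?_
    rw [h5, Matrix.star_apply]
  rw [congrFun (congrFun hspec a) b, h6, Finset.sum_eq_single i₀]
  · rw [hi₀]; push_cast; ring_nf; rfl
  · intro j _ hj
    rw [hzero j hj]; push_cast; ring
  · intro h; exact absurd (Finset.mem_univ i₀) h

private lemma rank_one_sandwich' {d : ℕ} (P X : Matrix (Fin d) (Fin d) ℂ) (u : Fin d → ℂ)
    (hu : ∀ a b, P a b = u a * (starRingEnd ℂ) (u b)) :
    P * X * P = (X * P).trace • P := by
  ext a b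
  have lhs : (P * X * P) a b = ∑ c, ∑ k, (u a * (starRingEnd ℂ) (u k) * X k c) * (u c * (starRingEnd ℂ) (u b)) := by
    simp only [mul_apply, hu, Finset.sum_mul]
  have rhs : ((X * P).trace • P) a b = ∑ k, ∑ c, (X k c * (u c * (starRingEnd ℂ) (u k))) * (u a * (starRingEnd ℂ) (u b)) := by
    simp only [Matrix.smul_apply, smul_eq_mul, Matrix.trace, Matrix.diag_apply, mul_apply, hu,
      Finset.sum_mul]
  rw [lhs, rhs, Finset.sum_comm]
  refine Finset.sum_congr rfl fun k _ => Finset.sum_congr rfl fun c _ => ?_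
  ring

private lemma sum_abs_le_aux' {d : ℕ} (e : Fin d → ℝ) (t : ℝ)
    (hc : ∀ i, e i ^ 3 = (1 - t) * e i)
    (hs : ∑ i, e i ^ 2 = 2 * (1 - t)) :
    ∑ i, |e i| ≤ 2 * Real.sqrt (1 - t) := by
  have h1t : 0 ≤ 1 - t := by
    have h := Finset.sum_nonneg (fun i (_ : i ∈ Finset.univ) => sq_nonneg (e i))
    rw [hs] at h; linarith
  set s := Real.sqrt (1 - t) with hsdef
  have hs2 : s * s = 1 - t := Real.mul_self_sqrt h1t
  have key : ∀ i, |e i| * s = e i ^ 2 := by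
    intro i
    rcases eq_or_ne (e i) 0 with h | h
    · simp [h]
    · have h2 : e i ^ 2 = 1 - t := by
        have h3 := hc i
        have h4 : e i ^ 2 * e i = (1 - t) * e i := by ring_nf; ring_nf at h3; linarith
        exact mul_right_cancel₀ h h4
      have h5 : |e i| = s := by
        rw [hsdef, ← h2, Real.sqrt_sq_eq_abs]
      rw [h5, hs2, h2]
  have hsum : (∑ i, |e i|) * s = 2 * (1 - t) := by
    rw [Finset.sum_mul]
    simp_rw [key]
    exact hs
  rcases eq_or_lt_of_le (Real.sqrt_nonneg (1 - t)) with h0 | h0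
  · have h1 : (∑ i, |e i|) = 0 := by
      have h6 : 1 - t = 0 := by rw [← hs2, hsdef, ← h0]; ring
      have h7 : ∑ i, e i ^ 2 = 0 := by rw [hs, h6]; ring
      have h8 := (Finset.sum_eq_zero_iff_of_nonneg
        (fun i (_ : i ∈ Finset.univ) => sq_nonneg (e i))).mp h7
      refine Finset.sum_eq_zero fun i _ => ?_
      have h9 := h8 i (Finset.mem_univ i)
      have h10 : e i = 0 := by nlinarith [h9]
      simp [h10]
    rw [h1]
    positivity
  · have h9 : ∑ i, |e i| = 2 * s := by
      apply mul_right_cancel₀ (ne_of_gt h0)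
      rw [hsum, mul_assoc, hs2]
    rw [h9]

theorem stmt_11 (d : ℕ) (P Q : Matrix (Fin d) (Fin d) ℂ)
    (hP : P.IsHermitian) (hP2 : P * P = P) (hPtr : P.trace = 1)
    (hQ : Q.IsHermitian) (hQ2 : Q * Q = Q) (hQtr : Q.trace = 1)
    (A₁ A₂ : Matrix (Fin d) (Fin d) ℂ)
    (hA₁ : A₁.PosSemidef) (hA₂ : A₂.PosSemidef)
    (hsum : ((1 : Matrix (Fin d) (Fin d) ℂ) - (A₁ + A₂)).PosSemidef) :
    ((A₁ - A₂) * (P - Q)).trace.re ≤ 2 * Real.sqrt (1 - (P * Q).trace.re) := by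
  classical
  set X : Matrix (Fin d) (Fin d) ℂ := A₁ - A₂ with hXdef
  set τ : ℂ := (P * Q).trace with hτ
  set t : ℝ := τ.re with ht
  obtain ⟨u, hu⟩ := rank_one_vec' P hP hP2 hPtr
  obtain ⟨w, hw⟩ := rank_one_vec' Q hQ hQ2 hQtr
  have hPQP : P * Q * P = τ • P := by
    rw [rank_one_sandwich' P Q u hu, trace_mul_comm]
  have hQPQ : Q * P * Q = τ • Q := rank_one_sandwich' Q P w hw
  set R : Matrix (Fin d) (Fin d) ℂ := P - Q with hRdef
  have hR : R.IsHermitian := hP.sub hQ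
  have hP2' : ∀ M : Matrix (Fin d) (Fin d) ℂ, P * (P * M) = P * M := fun M => by
    rw [← mul_assoc, hP2]
  have hQ2' : ∀ M : Matrix (Fin d) (Fin d) ℂ, Q * (Q * M) = Q * M := fun M => by
    rw [← mul_assoc, hQ2]
  have hcube : R * R * R = (1 - τ) • R := by
    have expand : R * R * R = P - Q - P * Q * P + Q * P * Q := by
      rw [hRdef]
      simp only [sub_mul, mul_sub, mul_assoc, hP2, hQ2, hP2', hQ2']
      noncomm_ring
    rw [expand, hPQP, hQPQ, hRdef, sub_smul, one_smul, smul_sub]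
    abel
  have hsq : R * R = P + Q - P * Q - Q * P := by
    rw [hRdef]
    simp only [sub_mul, mul_sub, mul_assoc, hP2, hQ2, hP2', hQ2']
    noncomm_ring
  set V : Matrix (Fin d) (Fin d) ℂ := (hR.eigenvectorUnitary : Matrix (Fin d) (Fin d) ℂ) with hV
  set e : Fin d → ℝ := hR.eigenvalues with he
  set D : Matrix (Fin d) (Fin d) ℂ := diagonal (RCLike.ofReal ∘ e) with hD
  have hspec : R = V * D * star V := hR.spectral_theorem
  have hDc : D * D * D = (1 - τ) • D := by
    apply conj_cancel' hR.eigenvectorUnitary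
    have h1 : V * (D * D * D) * star V = R * R * R := by
      rw [show V * (D * D * D) * star V = (V * (D * D) * star V) * (V * D * star V) from
        (unitary_conj_mul' hR.eigenvectorUnitary (D * D) D).symm,
        show V * (D * D) * star V = (V * D * star V) * (V * D * star V) from
        (unitary_conj_mul' hR.eigenvectorUnitary D D).symm, ← hspec]
    rw [h1, hcube]
    simp only [mul_smul_comm, smul_mul_assoc, ← hspec]
    exact congrArg _ hspec
  have hcube_e : ∀ i, e i ^ 3 = (1 - t) * e i := by
    intro i
    have h1 := congrFun (congrFun hDc i) i
    simp only [hD, diagonal_mul_diagonal, diagonal_apply_eq, Function.comp_apply,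
      Matrix.smul_apply, smul_eq_mul] at h1
    have h1' : ((e i * e i * e i : ℝ) : ℂ) = (1 - τ) * ((e i : ℝ) : ℂ) := by
      push_cast; exact_mod_cast h1
    have h2 := congrArg Complex.re h1'
    simp only [Complex.ofReal_re, Complex.mul_re, Complex.ofReal_im, mul_zero, sub_zero,
      Complex.sub_re, Complex.one_re] at h2
    have h3 : e i ^ 3 = e i * e i * e i := by ring
    rw [h3, h2, ht]
  have htrR2 : (R * R).trace = 2 - 2 * τ := by
    rw [hsq, Matrix.trace_sub, Matrix.trace_sub, Matrix.trace_add, hPtr, hQtr,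
      trace_mul_comm Q P, ← hτ]
    ring
  have htrD2 : (R * R).trace = ∑ i, ((e i : ℝ) : ℂ) ^ 2 := by
    have h1 : R * R = V * (D * D) * star V := by
      rw [hspec, unitary_conj_mul']
    rw [h1, trace_unitary_conj', hD, diagonal_mul_diagonal, trace_diagonal]
    refine Finset.sum_congr rfl fun i _ => ?_
    simp [Function.comp_apply]
    ring
  have hsum_sq : ∑ i, e i ^ 2 = 2 * (1 - t) := by
    have h1 : ((∑ i, e i ^ 2 : ℝ) : ℂ) = 2 - 2 * τ := by
      rw [← htrR2, htrD2]
      push_cast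
      rfl
    have h2 := congrArg Complex.re h1
    simp only [Complex.ofReal_re, Complex.sub_re, Complex.mul_re, Complex.re_ofNat,
      Complex.im_ofNat, zero_mul, sub_zero, ht] at h2
    rw [h2, ht]; ring
  set M : Matrix (Fin d) (Fin d) ℂ := star V * X * V with hM
  have hms : V * star V = 1 := Unitary.coe_mul_star_self hR.eigenvectorUnitary
  have hstarV : star V * V = 1 := Unitary.coe_star_mul_self hR.eigenvectorUnitary
  have hXM : X = V * M * star V := by
    rw [hM]
    simp only [← mul_assoc]
    rw [hms, one_mul, mul_assoc, hms, mul_one]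
  have htrXR : (X * R).trace = ∑ i, M i i * ((e i : ℝ) : ℂ) := by
    have h1 : X * R = V * (M * D) * star V := by
      conv_lhs => rw [hXM, hspec]
      exact unitary_conj_mul' hR.eigenvectorUnitary M D
    rw [h1, trace_unitary_conj', Matrix.trace]
    refine Finset.sum_congr rfl fun i _ => ?_
    rw [Matrix.diag_apply, hD, mul_diagonal]
    rfl
  have h1X : ((1 : Matrix (Fin d) (Fin d) ℂ) - X).PosSemidef := by
    have h : (1 : Matrix (Fin d) (Fin d) ℂ) - X = (1 - (A₁ + A₂)) + (A₂ + A₂) := by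
      rw [hXdef]; abel
    rw [h]; exact hsum.add (hA₂.add hA₂)
  have h2X : ((1 : Matrix (Fin d) (Fin d) ℂ) + X).PosSemidef := by
    have h : (1 : Matrix (Fin d) (Fin d) ℂ) + X = (1 - (A₁ + A₂)) + (A₁ + A₁) := by
      rw [hXdef]; abel
    rw [h]; exact hsum.add (hA₁.add hA₁)
  have hMbound : ∀ i, |(M i i).re| ≤ 1 := by
    intro i
    have hconj1 : star V * ((1 : Matrix (Fin d) (Fin d) ℂ) - X) * V = 1 - M := by
      rw [mul_sub, mul_one, sub_mul, hstarV, hM]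
    have hconj2 : star V * ((1 : Matrix (Fin d) (Fin d) ℂ) + X) * V = 1 + M := by
      rw [mul_add, mul_one, add_mul, hstarV, hM]
    have hp1 : ((1 : Matrix (Fin d) (Fin d) ℂ) - M).PosSemidef := by
      rw [← hconj1]
      have h := h1X.conjTranspose_mul_mul_same V
      simpa [Matrix.star_eq_conjTranspose] using h
    have hp2 : ((1 : Matrix (Fin d) (Fin d) ℂ) + M).PosSemidef := by
      rw [← hconj2]
      have h := h2X.conjTranspose_mul_mul_same V
      simpa [Matrix.star_eq_conjTranspose] using h
    have b1 := psd_diag_re_nonneg' hp1 i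
    have b2 := psd_diag_re_nonneg' hp2 i
    simp only [Matrix.sub_apply, Matrix.add_apply, Matrix.one_apply_eq, Complex.sub_re,
      Complex.add_re, Complex.one_re] at b1 b2
    rw [abs_le]
    constructor <;> linarith
  have hre : (X * R).trace.re = ∑ i, (M i i).re * e i := by
    rw [htrXR, Complex.re_sum]
    refine Finset.sum_congr rfl fun i _ => ?_
    simp [Complex.mul_re]
  calc (X * R).trace.re = ∑ i, (M i i).re * e i := hre
    _ ≤ ∑ i, |e i| := by
        refine Finset.sum_le_sum fun i _ => ?_
        calc (M i i).re * e i ≤ |(M i i).re * e i| := le_abs_self _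
          _ = |(M i i).re| * |e i| := abs_mul _ _
          _ ≤ 1 * |e i| := mul_le_mul_of_nonneg_right (hMbound i) (abs_nonneg _)
          _ = |e i| := one_mul _
    _ ≤ 2 * Real.sqrt (1 - t) := sum_abs_le_aux' e t hcube_e hsum_sq
end

section
/- For y = 1,2,3,4 let r_y ∈ ℝ³ be the unit vectors r₁ = (1,1,1)/√3, r₂ = (1,−1,−1)/√3, r₃ = (−1,1,−1)/√3, r₄ = (−1,−1,1)/√3, and define the qubit projections B^y_1 = (1/2)(𝟙 + r_y·σ) and B^y_2 = 𝟙 − B^y_1, where r·σ = x σ_x + y σ_y + z σ_z with σ_x, σ_y, σ_z the Pauli matrices. Then each pair {B^y_1, B^y_2} is a projective rank-one measurement on ℂ², and (2/2)·∑_{1 ≤ y < z ≤ 4} ∑_{j,k=1}^{2} √(1 − tr(B^y_j B^z_k)) = 4·(√3 + √6). -/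
open Finset Matrix

/-- The Pauli matrix `σ_x`. -/
def pauliX : Matrix (Fin 2) (Fin 2) ℂ := !![0, 1; 1, 0]

/-- The Pauli matrix `σ_y`. -/
def pauliY : Matrix (Fin 2) (Fin 2) ℂ := !![0, -Complex.I; Complex.I, 0]

/-- The Pauli matrix `σ_z`. -/
def pauliZ : Matrix (Fin 2) (Fin 2) ℂ := !![1, 0; 0, -1]

/-- `r · σ` for a vector `r ∈ ℝ³`. -/
def dotPauli (r : Fin 3 → ℝ) : Matrix (Fin 2) (Fin 2) ℂ :=
  (r 0 : ℂ) • pauliX + (r 1 : ℂ) • pauliY + (r 2 : ℂ) • pauliZ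

/-- The four Bloch vectors of a regular tetrahedron. -/
noncomputable def tetra : Fin 4 → Fin 3 → ℝ :=
  ![fun i => (Real.sqrt 3)⁻¹ * ![1, 1, 1] i,
    fun i => (Real.sqrt 3)⁻¹ * ![1, -1, -1] i,
    fun i => (Real.sqrt 3)⁻¹ * ![-1, 1, -1] i,
    fun i => (Real.sqrt 3)⁻¹ * ![-1, -1, 1] i]

/-- The qubit measurement `{B^y_1, B^y_2}` with Bloch vector `tetra y`:
`B^y_1 = (1/2)(𝟙 + r_y·σ)`, `B^y_2 = 𝟙 − B^y_1`. -/
noncomputable def tetraB (y : Fin 4) : Fin 2 → Matrix (Fin 2) (Fin 2) ℂ :=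
  ![(1 / 2 : ℂ) • (1 + dotPauli (tetra y)),
    1 - (1 / 2 : ℂ) • (1 + dotPauli (tetra y))]

noncomputable def sg : Fin 2 → ℝ := ![1, -1]

lemma herm (r : Fin 3 → ℝ) : ((1/2:ℂ)•(1 + dotPauli r)).IsHermitian := by
  show _ᴴ = _
  ext i j
  fin_cases i <;> fin_cases j <;>
    simp [dotPauli, pauliX, pauliY, pauliZ, Matrix.conjTranspose_apply, Matrix.one_apply,
      Complex.ext_iff] <;> ring

lemma idem (r : Fin 3 → ℝ) (h : r 0^2 + r 1^2 + r 2^2 = 1) :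
    ((1/2:ℂ)•(1 + dotPauli r)) * ((1/2:ℂ)•(1 + dotPauli r)) = (1/2:ℂ)•(1 + dotPauli r) := by
  ext i j
  fin_cases i <;> fin_cases j <;>
    (simp [dotPauli, pauliX, pauliY, pauliZ, Matrix.mul_apply, Fin.sum_univ_two,
      Matrix.one_apply, Complex.ext_iff]
     try constructor
     all_goals first | linear_combination h/4 | linear_combination -h/4 | ring)

lemma tr1 (r : Fin 3 → ℝ) : ((1/2:ℂ)•(1 + dotPauli r)).trace = 1 := by
  simp [dotPauli, pauliX, pauliY, pauliZ, Matrix.trace, Fin.sum_univ_two, Matrix.one_apply]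
  ring

lemma dotPauli_neg (r : Fin 3 → ℝ) : dotPauli (-r) = -dotPauli r := by
  simp [dotPauli]
  module

lemma tetraB_eq (y : Fin 4) (j : Fin 2) :
    tetraB y j = (1/2:ℂ) • (1 + dotPauli (sg j • tetra y)) := by
  match j with
  | 0 => simp [tetraB, sg]
  | 1 =>
    show 1 - (1/2:ℂ) • (1 + dotPauli (tetra y)) = _
    have : sg 1 • tetra y = -(tetra y) := by
      funext i; simp [sg]
    rw [this, dotPauli_neg]
    module

lemma key2 (r s : Fin 3 → ℝ) :
    ((((1/2:ℂ)•(1 + dotPauli r)) * ((1/2:ℂ)•(1 + dotPauli s))).trace).re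
      = (1 + (r 0 * s 0 + r 1 * s 1 + r 2 * s 2))/2 := by
  simp [dotPauli, pauliX, pauliY, pauliZ, Matrix.trace, Matrix.mul_apply, Fin.sum_univ_two,
    Matrix.one_apply]
  ring

lemma tr_re (y z : Fin 4) (j k : Fin 2) :
    ((tetraB y j * tetraB z k).trace).re
      = (1 + sg j * sg k * (tetra y 0 * tetra z 0 + tetra y 1 * tetra z 1
            + tetra y 2 * tetra z 2))/2 := by
  rw [tetraB_eq, tetraB_eq, key2]
  simp [Pi.smul_apply, smul_eq_mul]
  ring

lemma hs : ((Real.sqrt 3)⁻¹ : ℝ)^2 = 1/3 := by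
  rw [← Real.sqrt_inv, Real.sq_sqrt] <;> norm_num

lemma dotv (y z : Fin 4) (h : y < z) :
    tetra y 0 * tetra z 0 + tetra y 1 * tetra z 1 + tetra y 2 * tetra z 2 = -1/3 := by
  fin_cases y <;> fin_cases z <;> first
      | exact absurd h (by decide)
      | (norm_num [tetra, Matrix.vecHead, Matrix.vecTail, Matrix.cons_val_two]; nlinarith [hs])

lemma hunit (y : Fin 4) : tetra y 0^2 + tetra y 1^2 + tetra y 2^2 = 1 := by
  fin_cases y <;> norm_num [tetra, Matrix.vecHead, Matrix.vecTail, Matrix.cons_val_two] <;> nlinarith [hs]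

lemma hunit' (y : Fin 4) (a : Fin 2) :
    (sg a • tetra y) 0^2 + (sg a • tetra y) 1^2 + (sg a • tetra y) 2^2 = 1 := by
  have h1 := hunit y
  have h2 : sg a ^ 2 = 1 := by fin_cases a <;> norm_num [sg]
  simp only [Pi.smul_apply, smul_eq_mul]
  nlinarith [h1, h2]

lemma h13 : Real.sqrt (1/3) = Real.sqrt 3 / 3 := by
  rw [show (1/3:ℝ) = 3/3^2 by norm_num, Real.sqrt_div (by norm_num),
    Real.sqrt_sq (by norm_num)]

lemma h23 : Real.sqrt (2/3) = Real.sqrt 6 / 3 := by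
  rw [show (2/3:ℝ) = 6/3^2 by norm_num, Real.sqrt_div (by norm_num),
    Real.sqrt_sq (by norm_num)]

lemma pairsum (y z : Fin 4) (h : y < z) :
    ∑ j : Fin 2, ∑ k : Fin 2, Real.sqrt (1 - ((tetraB y j * tetraB z k).trace).re)
      = 2*(Real.sqrt 6/3) + 2*(Real.sqrt 3/3) := by
  have hd := dotv y z h
  simp only [tr_re, hd, Fin.sum_univ_two]
  norm_num [sg]
  have e1 : Real.sqrt 2 / Real.sqrt 3 = Real.sqrt 6 / 3 := by
    rw [← Real.sqrt_div (by norm_num : (0:ℝ) ≤ 2)]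
    rw [show ((2:ℝ)/3) = 2/3 by norm_num]
    exact h23
  have e2 : ((Real.sqrt 3)⁻¹:ℝ) = Real.sqrt 3 / 3 := by
    rw [inv_eq_one_div, div_eq_div_iff (by positivity) (by norm_num)]
    nlinarith [Real.sq_sqrt (show (0:ℝ) ≤ 3 by norm_num)]
  rw [e1, e2]
  ring

theorem stmt_14 :
    (∀ (y : Fin 4) (a : Fin 2),
      (tetraB y a).IsHermitian ∧ tetraB y a * tetraB y a = tetraB y a ∧
        (tetraB y a).trace = 1) ∧
    (∀ y : Fin 4, ∑ a, tetraB y a = 1) ∧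
    ((2 / 2 : ℝ) * ∑ p ∈ Finset.univ.filter (fun p : Fin 4 × Fin 4 => p.1 < p.2),
        ∑ j : Fin 2, ∑ k : Fin 2,
          Real.sqrt (1 - ((tetraB p.1 j * tetraB p.2 k).trace).re)
      = 4 * (Real.sqrt 3 + Real.sqrt 6)) := by
  refine ⟨?_, ?_, ?_⟩
  · intro y a
    rw [tetraB_eq]
    exact ⟨herm _, idem _ (hunit' y a), tr1 _⟩
  · intro y
    rw [Fin.sum_univ_two]
    show (1/2:ℂ) • (1 + dotPauli (tetra y)) + (1 - (1/2:ℂ) • (1 + dotPauli (tetra y))) = 1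
    abel
  · rw [Finset.sum_filter, Fintype.sum_prod_type]
    simp only [Fin.sum_univ_four]
    rw [if_neg (by decide), if_pos (by decide), if_pos (by decide), if_pos (by decide),
      if_neg (by decide), if_neg (by decide), if_pos (by decide), if_pos (by decide),
      if_neg (by decide), if_neg (by decide), if_neg (by decide), if_pos (by decide),
      if_neg (by decide), if_neg (by decide), if_neg (by decide), if_neg (by decide)]
    rw [pairsum 0 1 (by decide), pairsum 0 2 (by decide), pairsum 0 3 (by decide),
      pairsum 1 2 (by decide), pairsum 1 3 (by decide), pairsum 2 3 (by decide)]
    ring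
end
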